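/- arXiv:1707.09171 — 2 statements merged into one kernel-verified Lean document; each statement's English description precedes it below -/
import Mathlib

section
/- Let X be a two-dimensional real normed space with unit sphere S and 0 < ρ < 1. Suppose u, v ∈ S generate finite ρ-polygons P_u and P_v. Then P_u and P_v have the same number of vertices. -/
open Real Set

/-- `N` is a norm on the two-dimensional real vector space `ℝ × ℝ`. -/
def IsNorm (N : ℝ × ℝ → ℝ) : Prop :=
  (∀ x, N x = 0 ↔ x = 0) ∧ (∀ (a : ℝ) (x : ℝ × ℝ), N (a • x) = |a| * N x) ∧
    ∀ x y, N (x + y) ≤ N x + N y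

/-- The 2D cross product `u ∧ v`; `u ≺ v` means `0 < wedge u v`. -/
def wedge (u v : ℝ × ℝ) : ℝ := u.1 * v.2 - u.2 * v.1

/-- `inf_{t ∈ [0,1]} N ((1−t)u + tv)`, the minimal `N`-norm on the segment `[u,v]`. -/
noncomputable def segInf (N : ℝ × ℝ → ℝ) (u v : ℝ × ℝ) : ℝ :=
  sInf ((fun t : ℝ => N ((1 - t) • u + t • v)) '' Icc (0:ℝ) 1)

/-- Property (P-ρS): every chord of the unit sphere of `N` that supports `ρS`
touches `ρS` at its midpoint. -/
def PropP (N : ℝ × ℝ → ℝ) (ρ : ℝ) : Prop :=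
  ∀ u v : ℝ × ℝ, N u = 1 → N v = 1 → segInf N u v = ρ →
    N ((1/2 : ℝ) • u + (1/2 : ℝ) • v) = ρ

lemma pluecker (a b c d : ℝ × ℝ) :
    wedge a b * wedge c d - wedge a c * wedge b d + wedge a d * wedge b c = 0 := by
  simp only [wedge]; ring

lemma cram (x x' p : ℝ × ℝ) (h : wedge x x' ≠ 0) :
    p = (wedge p x' / wedge x x') • x + (wedge x p / wedge x x') • x' := by
  simp only [wedge] at *
  have h1 : p.1 = (p.1 * x'.2 - p.2 * x'.1) / (x.1 * x'.2 - x.2 * x'.1) * x.1 +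
      (x.1 * p.2 - x.2 * p.1) / (x.1 * x'.2 - x.2 * x'.1) * x'.1 := by
    rw [div_mul_eq_mul_div, div_mul_eq_mul_div, ← add_div, eq_div_iff h]; ring
  have h2 : p.2 = (p.1 * x'.2 - p.2 * x'.1) / (x.1 * x'.2 - x.2 * x'.1) * x.2 +
      (x.1 * p.2 - x.2 * p.1) / (x.1 * x'.2 - x.2 * x'.1) * x'.2 := by
    rw [div_mul_eq_mul_div, div_mul_eq_mul_div, ← add_div, eq_div_iff h]; ring
  ext
  · simpa using h1
  · simpa using h2

section NormLemmas

variable {N : ℝ × ℝ → ℝ} (hN : IsNorm N)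
include hN

lemma N_zero : N 0 = 0 := (hN.1 0).2 rfl

lemma N_neg (x : ℝ × ℝ) : N (-x) = N x := by
  have := hN.2.1 (-1) x; simpa using this

lemma N_nonneg (x : ℝ × ℝ) : 0 ≤ N x := by
  have h := hN.2.2 x (-x)
  have h2 : N (x + -x) = 0 := by simpa using N_zero hN
  have h3 := N_neg hN x
  linarith

lemma N_abs_sub (p q : ℝ × ℝ) : |N p - N q| ≤ N (p - q) := by
  have h1 : N p ≤ N q + N (p - q) := by
    have := hN.2.2 q (p - q); simpa using this
  have h2 : N q ≤ N p + N (q - p) := by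
    have := hN.2.2 p (q - p); simpa using this
  have h3 : N (q - p) = N (p - q) := by
    have := N_neg hN (p - q); simpa [neg_sub] using this
  rw [abs_le]; constructor <;> linarith

lemma N_le_const (p : ℝ × ℝ) :
    N p ≤ (N (1,0) + N (0,1)) * max |p.1| |p.2| := by
  have hdec : p = p.1 • ((1:ℝ),(0:ℝ)) + p.2 • ((0:ℝ),(1:ℝ)) := by
    ext <;> simp
  have h1 : N p ≤ N (p.1 • ((1:ℝ),(0:ℝ))) + N (p.2 • ((0:ℝ),(1:ℝ))) := by
    conv_lhs => rw [hdec]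
    exact hN.2.2 _ _
  rw [hN.2.1, hN.2.1] at h1
  have e1 : 0 ≤ N ((1:ℝ),(0:ℝ)) := N_nonneg hN _
  have e2 : 0 ≤ N ((0:ℝ),(1:ℝ)) := N_nonneg hN _
  have m1 : |p.1| ≤ max |p.1| |p.2| := le_max_left _ _
  have m2 : |p.2| ≤ max |p.1| |p.2| := le_max_right _ _
  nlinarith [abs_nonneg p.1, abs_nonneg p.2]

lemma N_continuous : Continuous N := by
  rw [Metric.continuous_iff]
  intro b ε hε
  set C : ℝ := N (1,0) + N (0,1) + 1 with hC
  have e1 : 0 ≤ N ((1:ℝ),(0:ℝ)) := N_nonneg hN _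
  have e2 : 0 ≤ N ((0:ℝ),(1:ℝ)) := N_nonneg hN _
  have hC0 : 0 < C := by simp only [hC]; linarith
  refine ⟨ε / C, by positivity, fun a hab => ?_⟩
  have h1 : |N a - N b| ≤ N (a - b) := N_abs_sub hN a b
  have h2 : N (a - b) ≤ (N (1,0) + N (0,1)) * max |(a-b).1| |(a-b).2| := N_le_const hN _
  have h3 : dist a b = max (dist a.1 b.1) (dist a.2 b.2) := Prod.dist_eq
  have h4 : (a-b).1 = a.1 - b.1 := rfl
  have h5 : (a-b).2 = a.2 - b.2 := rfl
  rw [Real.dist_eq]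
  have h6 : max |(a-b).1| |(a-b).2| = dist a b := by
    rw [h3, h4, h5, Real.dist_eq, Real.dist_eq]
  have h7 : dist a b < ε / C := hab
  have h8 : 0 ≤ dist a b := dist_nonneg
  calc |N a - N b| ≤ (N (1,0) + N (0,1)) * dist a b := by rw [← h6]; linarith
    _ ≤ (C - 1) * (ε / C) := by
        apply mul_le_mul (by simp [hC]) (le_of_lt h7) h8 (by linarith)
    _ < ε := by
        rw [sub_mul, one_mul]
        have : C * (ε / C) = ε := by field_simp
        have hpos : 0 < ε / C := by positivity
        nlinarith

lemma segInf_le (u v : ℝ × ℝ) {t : ℝ} (ht : t ∈ Icc (0:ℝ) 1) :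
    segInf N u v ≤ N ((1-t) • u + t • v) := by
  apply csInf_le
  · exact ⟨0, fun y hy => by
      obtain ⟨s, _, rfl⟩ := hy; exact N_nonneg hN _⟩
  · exact ⟨t, ht, rfl⟩

lemma segInf_attained (u v : ℝ × ℝ) :
    ∃ t ∈ Icc (0:ℝ) 1, N ((1-t) • u + t • v) = segInf N u v := by
  have hcont : ContinuousOn (fun t : ℝ => N ((1 - t) • u + t • v)) (Icc 0 1) := by
    apply Continuous.continuousOn
    exact (N_continuous hN).comp (by fun_prop)
  obtain ⟨t, ht, hmin⟩ := isCompact_Icc.exists_isMinOn ⟨0, by norm_num⟩ hcont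
  refine ⟨t, ht, le_antisymm ?_ (segInf_le hN u v ht)⟩
  apply le_csInf
  · exact ⟨N ((1-(0:ℝ)) • u + (0:ℝ) • v), ⟨0, by norm_num, rfl⟩⟩
  · rintro y ⟨s, hs, rfl⟩
    exact hmin hs

end NormLemmas

section Geometry

variable {N : ℝ × ℝ → ℝ} (hN : IsNorm N) {ρ : ℝ}
include hN

/-- Convexity along the chord: on the whole line through `x, x'` the norm is `≥ ρ`. -/
lemma line_ge (hρ1 : ρ ≤ 1) {x x' : ℝ × ℝ} (hx : N x = 1) (hx' : N x' = 1)
    (hseg : segInf N x x' = ρ) (b : ℝ) : ρ ≤ N ((1 - b) • x + b • x') := by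
  rcases le_or_gt b 0 with hb | hb
  · rcases eq_or_lt_of_le hb with hb0 | hb0
    · have : (1 - b) • x + b • x' = x := by rw [hb0]; module
      rw [this, hx]; exact hρ1
    · -- b < 0 : x is a convex combination of the point and x'
      set c := (1 - b) • x + b • x' with hc
      have h1b : (0:ℝ) < 1 - b := by linarith
      have key : x = (1/(1-b)) • c + (-b/(1-b)) • x' := by
        rw [hc]
        have h1b' : (1:ℝ) - b ≠ 0 := ne_of_gt h1b
        match_scalars <;> field_simp <;> ring
      have htri : N x ≤ N ((1/(1-b)) • c) + N ((-b/(1-b)) • x') := by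
        conv_lhs => rw [key]
        exact hN.2.2 _ _
      rw [hN.2.1, hN.2.1, hx'] at htri
      have ha1 : |1/(1-b)| = 1/(1-b) := abs_of_pos (one_div_pos.mpr h1b)
      have ha2 : |-b/(1-b)| = -b/(1-b) := abs_of_pos (div_pos (by linarith) h1b)
      rw [ha1, ha2, hx] at htri
      have e : (1:ℝ) - (-b/(1-b)) * 1 = 1/(1-b) * 1 := by
        rw [mul_one, mul_one]; field_simp; ring
      have h5 : 1/(1-b) * 1 ≤ 1/(1-b) * N c := by linarith
      have : 1 ≤ N c := (mul_le_mul_iff_right₀ (one_div_pos.mpr h1b)).mp (by linarith)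
      linarith
  · rcases le_or_gt b 1 with hb1 | hb1
    · rw [← hseg]; exact segInf_le hN x x' ⟨le_of_lt hb, hb1⟩
    · -- b > 1 : x' is a convex combination of x and the point
      set c := (1 - b) • x + b • x' with hc
      have key : x' = (1 - 1/b) • x + (1/b) • c := by
        rw [hc]
        have hbne : b ≠ 0 := by linarith
        match_scalars <;> field_simp <;> ring
      have htri : N x' ≤ N ((1 - 1/b) • x) + N ((1/b) • c) := by
        conv_lhs => rw [key]
        exact hN.2.2 _ _
      rw [hN.2.1, hN.2.1, hx, hx'] at htri
      have ha1 : |1 - 1/b| = 1 - 1/b := by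
        apply abs_of_nonneg
        have : 1/b < 1 := by rw [div_lt_one (by linarith)]; linarith
        linarith
      have ha2 : |1/b| = 1/b := abs_of_pos (by positivity)
      rw [ha1, ha2] at htri
      have hbpos : (0:ℝ) < 1/b := by positivity
      have h5 : 1/b * 1 ≤ 1/b * N c := by linarith
      have : 1 ≤ N c := (mul_le_mul_iff_right₀ hbpos).mp h5
      linarith

/-- The norm is `< 1` strictly inside the chord. -/
lemma interior_lt_one (hρ1 : ρ < 1) {x x' : ℝ × ℝ} (hx : N x = 1) (hx' : N x' = 1)
    (hseg : segInf N x x' = ρ) {t : ℝ} (ht : 0 < t) (ht1 : t < 1) :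
    N ((1 - t) • x + t • x') < 1 := by
  obtain ⟨t0, ht0, hmin⟩ := segInf_attained hN x x'
  rw [hseg] at hmin
  have ht00 : 0 < t0 := by
    rcases eq_or_lt_of_le ht0.1 with h | h
    · exfalso
      rw [← h] at hmin
      simp at hmin
      rw [hx] at hmin
      linarith
    · exact h
  have ht01 : t0 < 1 := by
    rcases eq_or_lt_of_le ht0.2 with h | h
    · exfalso
      rw [h] at hmin
      simp at hmin
      rw [hx'] at hmin
      linarith
    · exact h
  rcases lt_trichotomy t t0 with hlt | heq | hgt
  · set s := t / t0 with hs
    have hs0 : 0 < s := by positivity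
    have hs1 : s < 1 := by rw [hs, div_lt_one ht00]; exact hlt
    have ht00' : t0 ≠ 0 := ne_of_gt ht00
    have key : (1 - t) • x + t • x' =
        (1 - s) • x + s • ((1 - t0) • x + t0 • x') := by
      have gen : (1 - s) • x + s • ((1 - t0) • x + t0 • x') =
          (1 - s*t0) • x + (s*t0) • x' := by module
      have hst : s * t0 = t := by rw [hs]; field_simp
      rw [gen, hst]
    rw [key]
    calc N ((1 - s) • x + s • ((1 - t0) • x + t0 • x'))
        ≤ N ((1-s) • x) + N (s • ((1 - t0) • x + t0 • x')) := hN.2.2 _ _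
      _ = (1-s) * 1 + s * ρ := by
          rw [hN.2.1, hN.2.1, hx, hmin, abs_of_pos (by linarith), abs_of_pos hs0]
      _ < 1 := by nlinarith
  · rw [← heq] at hmin; rw [hmin]; exact hρ1
  · set s := (t - t0) / (1 - t0) with hs
    have hs0 : 0 < s := by
      rw [hs]; apply div_pos <;> linarith
    have hs1 : s < 1 := by
      rw [hs, div_lt_one (by linarith)]; linarith
    have h1t0 : (1:ℝ) - t0 ≠ 0 := by
      intro h; rw [sub_eq_zero] at h; exact absurd h.symm (ne_of_lt ht01)
    have key : (1 - t) • x + t • x' =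
        (1 - s) • ((1 - t0) • x + t0 • x') + s • x' := by
      have gen : (1 - s) • ((1 - t0) • x + t0 • x') + s • x' =
          (1 - (t0 + s*(1-t0))) • x + (t0 + s*(1-t0)) • x' := by module
      have hst : t0 + s * (1 - t0) = t := by
        rw [hs]; field_simp; ring
      rw [gen, hst]
    rw [key]
    calc N ((1 - s) • ((1 - t0) • x + t0 • x') + s • x')
        ≤ N ((1-s) • ((1 - t0) • x + t0 • x')) + N (s • x') := hN.2.2 _ _
      _ = (1-s) * ρ + s * 1 := by
          rw [hN.2.1, hN.2.1, hx', hmin, abs_of_pos (by linarith), abs_of_pos hs0]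
      _ < 1 := by nlinarith

/-- Points of norm `ρ` lie in the half-plane `{φ ≤ 1}` determined by the chord. -/
lemma phi_ball (hρ0 : 0 < ρ) (hρ1 : ρ < 1) {x x' q : ℝ × ℝ}
    (hx : N x = 1) (hx' : N x' = 1) (hw : 0 < wedge x x')
    (hseg : segInf N x x' = ρ) (hq : N q = ρ) :
    wedge x q + wedge q x' ≤ wedge x x' := by
  by_contra hcon
  push_neg at hcon
  set F := wedge x q + wedge q x' with hF
  set D := wedge x x' with hD
  have hF0 : 0 < F := lt_trans hw hcon
  set r := (D / F) • q with hr
  have hNr : N r = (D/F) * ρ := by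
    rw [hr, hN.2.1, abs_of_pos (by positivity), hq]
  have hNrρ : N r < ρ := by
    rw [hNr]
    have : D / F < 1 := by rw [div_lt_one hF0]; exact hcon
    nlinarith
  -- decompose r over the basis x, x'
  have hrd := cram x x' r (ne_of_gt hw)
  set a := wedge r x' / D with ha
  set b := wedge x r / D with hb
  have hab : a + b = 1 := by
    rw [ha, hb]
    have h1 : wedge r x' = (D/F) * wedge q x' := by
      rw [hr]; simp only [wedge, Prod.smul_fst, Prod.smul_snd, smul_eq_mul]; ring
    have h2 : wedge x r = (D/F) * wedge x q := by
      rw [hr]; simp only [wedge, Prod.smul_fst, Prod.smul_snd, smul_eq_mul]; ring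
    rw [h1, h2]
    field_simp
    rw [hF]; ring
  have hreq : r = (1 - b) • x + b • x' := by
    have : a = 1 - b := by linarith
    rw [← this]
    exact hrd
  have := line_ge hN (le_of_lt hρ1) hx hx' hseg b
  rw [← hreq] at this
  linarith

/-- Key geometric lemma (KL): if `y` lies strictly in the arc `(x, x⋆)`, then `y⋆`
does not lie strictly in that arc. -/
lemma KL (hρ0 : 0 < ρ) (hρ1 : ρ < 1) {x sx y sy : ℝ × ℝ}
    (hx : N x = 1) (hsx : N sx = 1) (hwx : 0 < wedge x sx) (hsegx : segInf N x sx = ρ)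
    (hy : N y = 1) (hsy : N sy = 1) (hsegy : segInf N y sy = ρ)
    (h1 : 0 < wedge x y) (h2 : 0 < wedge y sx) :
    ¬ (0 < wedge x sy ∧ 0 < wedge sy sx) := by
  rintro ⟨h3, h4⟩
  have phi_gt : ∀ z : ℝ × ℝ, N z = 1 → 0 < wedge x z → 0 < wedge z sx →
      wedge x sx < wedge x z + wedge z sx := by
    intro z hz hz1 hz2
    set D := wedge x sx with hD
    set a := wedge z sx / D with ha
    set b := wedge x z / D with hb
    have ha0 : 0 < a := by positivity
    have hb0 : 0 < b := by positivity
    have hzdec := cram x sx z (ne_of_gt hwx)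
    rw [← ha, ← hb] at hzdec
    have htri : N z ≤ a + b := by
      calc N z ≤ N (a • x) + N (b • sx) := by
            conv_lhs => rw [hzdec]
            exact hN.2.2 _ _
        _ = a + b := by
            rw [hN.2.1, hN.2.1, hx, hsx, abs_of_pos ha0, abs_of_pos hb0]; ring
    rw [hz] at htri
    have hab1 : a + b ≠ 1 := by
      intro habeq
      have hb1 : b < 1 := by linarith
      have : z = (1 - b) • x + b • sx := by
        have : a = 1 - b := by linarith
        rw [← this]; exact hzdec
      have hlt := interior_lt_one hN hρ1 hx hsx hsegx hb0 hb1
      rw [← this, hz] at hlt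
      linarith
    have hab : 1 < a + b := lt_of_le_of_ne htri (Ne.symm hab1)
    have : D < a * D + b * D := by nlinarith
    rw [ha, hb] at this
    field_simp at this
    linarith [this]
  have hφy := phi_gt y hy h1 h2
  have hφsy := phi_gt sy hsy h3 h4
  obtain ⟨t0, ht0, hq⟩ := segInf_attained hN y sy
  set q := (1 - t0) • y + t0 • sy with hqdef
  have hqρ : N q = ρ := by rw [hq, hsegy]
  have hball := phi_ball hN hρ0 hρ1 hx hsx hwx hsegx hqρ
  have hexp : wedge x q + wedge q sx =
      (1 - t0) * (wedge x y + wedge y sx) + t0 * (wedge x sy + wedge sy sx) := by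
    simp only [hqdef, wedge, Prod.fst_add, Prod.snd_add, Prod.smul_fst, Prod.smul_snd,
      smul_eq_mul]
    ring
  rw [hexp] at hball
  obtain ⟨ht00, ht01⟩ := ht0
  rcases eq_or_lt_of_le ht00 with h0 | h0
  · rw [← h0] at hball; simp at hball; linarith
  · have hb2 := mul_lt_mul_of_pos_left hφsy h0
    have hb1 := mul_le_mul_of_nonneg_left hφy.le (by linarith : (0:ℝ) ≤ 1 - t0)
    nlinarith

omit hN in
lemma wedge_zero_dep {a b : ℝ × ℝ} (ha : a ≠ 0) (h : wedge a b = 0) : ∃ c : ℝ, b = c • a := by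
  simp only [wedge] at h
  rcases eq_or_ne a.1 0 with h1 | h1
  · have h2 : a.2 ≠ 0 := by
      intro h2; apply ha; ext <;> simp [h1, h2]
    refine ⟨b.2 / a.2, ?_⟩
    have hb1 : b.1 = 0 := by
      have : a.2 * b.1 = 0 := by rw [h1] at h; linarith
      rcases mul_eq_zero.1 this with h' | h'
      · exact absurd h' h2
      · exact h'
    ext
    · simp [hb1, h1]
    · simp [Prod.smul_snd, smul_eq_mul]
      field_simp
  · refine ⟨b.1 / a.1, ?_⟩
    ext
    · simp [Prod.smul_fst, smul_eq_mul]; field_simp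
    · simp [Prod.smul_snd, smul_eq_mul]
      field_simp
      nlinarith [h]

/-- Monotonicity lemma (ML): the successor map preserves the circular order locally. -/
lemma ML (hρ0 : 0 < ρ) (hρ1 : ρ < 1) {x sx y sy : ℝ × ℝ}
    (hx : N x = 1) (hsx : N sx = 1) (hwx : 0 < wedge x sx) (hsegx : segInf N x sx = ρ)
    (hy : N y = 1) (hsy : N sy = 1) (hwy : 0 < wedge y sy) (hsegy : segInf N y sy = ρ)
    (h1 : 0 < wedge x y) (h2 : 0 < wedge y sx) :
    sy = sx ∨ 0 < wedge sx sy := by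
  by_contra hcon
  push_neg at hcon
  obtain ⟨hne, hle⟩ := hcon
  rcases lt_or_eq_of_le hle with hlt | heq
  · -- 0 < wedge sy sx
    have hpos : 0 < wedge sy sx := by
      have : wedge sy sx = - wedge sx sy := by simp only [wedge]; ring
      rw [this]; linarith
    have h3 : wedge x sy ≤ 0 := by
      by_contra h3
      push_neg at h3
      exact KL hN hρ0 hρ1 hx hsx hwx hsegx hy hsy hsegy h1 h2 ⟨h3, hpos⟩
    have hp := pluecker x y sy sx
    nlinarith [mul_pos h1 hpos, mul_pos hwx hwy, mul_nonpos_of_nonpos_of_nonneg h3 (le_of_lt h2)]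
  · -- wedge sx sy = 0
    have hsxne : sx ≠ 0 := by
      intro h0
      rw [h0] at hsx
      rw [N_zero hN] at hsx
      linarith
    obtain ⟨c, hc⟩ := wedge_zero_dep hsxne heq
    have : N sy = |c| * N sx := by rw [hc]; exact hN.2.1 c sx
    rw [hsy, hsx, mul_one] at this
    rcases abs_eq (by norm_num : (0:ℝ) ≤ 1) |>.1 this.symm with h | h
    · apply hne; rw [hc, h, one_smul]
    · rw [h] at hc
      have : wedge y sy = - wedge y sx := by
        rw [hc]; simp only [wedge, Prod.smul_fst, Prod.smul_snd, smul_eq_mul]; ring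
      rw [this] at hwy
      linarith

end Geometry

section Angles

noncomputable def ang (p : ℝ × ℝ) : ℝ := Complex.arg ⟨p.1, p.2⟩

noncomputable def Dd (p q : ℝ × ℝ) : ℝ := toIocMod Real.two_pi_pos 0 (ang q - ang p)

lemma cplx_ne {p : ℝ × ℝ} (hp : p ≠ 0) : (⟨p.1, p.2⟩ : ℂ) ≠ 0 := by
  intro h
  apply hp
  have h1 : (⟨p.1, p.2⟩ : ℂ).re = (0:ℂ).re := by rw [h]
  have h2 : (⟨p.1, p.2⟩ : ℂ).im = (0:ℂ).im := by rw [h]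
  simp at h1 h2
  ext <;> simpa

lemma abs_cplx_pos {p : ℝ × ℝ} (hp : p ≠ 0) : 0 < ‖(⟨p.1, p.2⟩ : ℂ)‖ :=
  norm_pos_iff.mpr (cplx_ne hp)

lemma coord_eq {p : ℝ × ℝ} (hp : p ≠ 0) :
    p.1 = ‖(⟨p.1, p.2⟩ : ℂ)‖ * Real.cos (ang p) ∧
    p.2 = ‖(⟨p.1, p.2⟩ : ℂ)‖ * Real.sin (ang p) := by
  have h1 := Complex.cos_arg (cplx_ne hp)
  have h2 := Complex.sin_arg (⟨p.1, p.2⟩ : ℂ)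
  have hr := abs_cplx_pos hp
  constructor
  · rw [ang, h1]
    field_simp
  · rw [ang, h2]
    field_simp

lemma wedge_eq_sin {p q : ℝ × ℝ} (hp : p ≠ 0) (hq : q ≠ 0) :
    wedge p q = ‖(⟨p.1, p.2⟩ : ℂ)‖ * ‖(⟨q.1, q.2⟩ : ℂ)‖ *
      Real.sin (ang q - ang p) := by
  have hr1 := (abs_cplx_pos hp).ne'
  have hr2 := (abs_cplx_pos hq).ne'
  rw [wedge, Real.sin_sub, ang, ang, Complex.sin_arg, Complex.sin_arg,
    Complex.cos_arg (cplx_ne hp), Complex.cos_arg (cplx_ne hq)]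
  field_simp

lemma Dd_mem (p q : ℝ × ℝ) : Dd p q ∈ Ioc (0:ℝ) (2*π) := by
  have := toIocMod_mem_Ioc Real.two_pi_pos 0 (ang q - ang p)
  simpa [Dd] using this

lemma Dd_int (p q : ℝ × ℝ) : ∃ k : ℤ, ang q - ang p = Dd p q + k * (2*π) := by
  have := self_sub_toIocMod Real.two_pi_pos 0 (ang q - ang p)
  refine ⟨toIocDiv Real.two_pi_pos 0 (ang q - ang p), ?_⟩
  rw [Dd]
  have h2 : (toIocDiv Real.two_pi_pos 0 (ang q - ang p) : ℝ) * (2*π) =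
      toIocDiv Real.two_pi_pos 0 (ang q - ang p) • (2*π) := by
    rw [zsmul_eq_mul]
  rw [h2]
  linarith [this]

lemma sin_Dd (p q : ℝ × ℝ) : Real.sin (Dd p q) = Real.sin (ang q - ang p) := by
  obtain ⟨k, hk⟩ := Dd_int p q
  rw [hk, Real.sin_add_int_mul_two_pi]

lemma wedge_pos_iff_Dd {p q : ℝ × ℝ} (hp : p ≠ 0) (hq : q ≠ 0) :
    0 < wedge p q ↔ Dd p q < π := by
  rw [wedge_eq_sin hp hq]
  have hr1 := abs_cplx_pos hp
  have hr2 := abs_cplx_pos hq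
  have hmem := Dd_mem p q
  rw [mul_pos_iff]
  constructor
  · rintro (⟨_, hs⟩ | ⟨h, _⟩)
    · rw [← sin_Dd] at hs
      by_contra hge
      push_neg at hge
      have h1 : Dd p q - π ∈ Icc (0:ℝ) π := by
        constructor
        · linarith
        · have := hmem.2; linarith
      have h2 : 0 ≤ Real.sin (Dd p q - π) :=
        Real.sin_nonneg_of_nonneg_of_le_pi h1.1 h1.2
      have h3 : Real.sin (Dd p q - π + π) = - Real.sin (Dd p q - π) := Real.sin_add_pi _
      rw [sub_add_cancel] at h3
      rw [h3] at hs
      linarith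
    · exfalso
      nlinarith
  · intro hlt
    left
    refine ⟨mul_pos hr1 hr2, ?_⟩
    rw [← sin_Dd]
    exact Real.sin_pos_of_pos_of_lt_pi hmem.1 hlt

section DdNorm

variable {N : ℝ × ℝ → ℝ} (hN : IsNorm N)
include hN

lemma N_one_ne_zero {p : ℝ × ℝ} (hp : N p = 1) : p ≠ 0 := by
  intro h
  rw [h, N_zero hN] at hp
  norm_num at hp

lemma ang_inj {p q : ℝ × ℝ} (hp : N p = 1) (hq : N q = 1) (h : ang p = ang q) : p = q := by
  have hp0 := N_one_ne_zero hN hp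
  have hq0 := N_one_ne_zero hN hq
  obtain ⟨hp1, hp2⟩ := coord_eq hp0
  obtain ⟨hq1, hq2⟩ := coord_eq hq0
  set rp := ‖(⟨p.1, p.2⟩ : ℂ)‖ with hrp
  set rq := ‖(⟨q.1, q.2⟩ : ℂ)‖ with hrq
  have hrp0 := abs_cplx_pos hp0
  have hrq0 := abs_cplx_pos hq0
  have hpq : p = (rp / rq) • q := by
    ext
    · rw [hp1, Prod.smul_fst, smul_eq_mul, hq1, h]
      field_simp
      exact (mul_inv_cancel_right₀ hrq0.ne' _).symm
    · rw [hp2, Prod.smul_snd, smul_eq_mul, hq2, h]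
      field_simp
      exact (mul_inv_cancel_right₀ hrq0.ne' _).symm
  have hN2 : N p = |rp/rq| * N q := by rw [hpq]; exact hN.2.1 _ _
  rw [hp, hq, mul_one, abs_of_pos (by positivity)] at hN2
  rw [hpq, ← hN2]
  simp

lemma Dd_eq_two_pi_iff {p q : ℝ × ℝ} (hp : N p = 1) (hq : N q = 1) :
    Dd p q = 2*π ↔ p = q := by
  constructor
  · intro h
    obtain ⟨k, hk⟩ := Dd_int p q
    rw [h] at hk
    have hb1 : ang q - ang p < 2*π := by
      have := Complex.arg_le_pi (⟨q.1, q.2⟩ : ℂ)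
      have := Complex.neg_pi_lt_arg (⟨p.1, p.2⟩ : ℂ)
      rw [ang, ang]
      linarith
    have hb2 : -(2*π) < ang q - ang p := by
      have := Complex.arg_le_pi (⟨p.1, p.2⟩ : ℂ)
      have := Complex.neg_pi_lt_arg (⟨q.1, q.2⟩ : ℂ)
      rw [ang, ang]
      linarith
    have hπ := Real.pi_pos
    have hk1 : (k:ℝ) < 0 := by nlinarith
    have hk2 : (-2:ℝ) < k := by nlinarith
    have hk1' : k < 0 := by exact_mod_cast hk1
    have hk2' : (-2:ℤ) < k := by exact_mod_cast hk2
    have : k = -1 := by omega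
    rw [this] at hk
    push_cast at hk
    have hang : ang p = ang q := by linarith
    exact ang_inj hN hp hq hang
  · intro h
    subst h
    rw [Dd, sub_self, toIocMod_eq_iff]
    have hπ := Real.pi_pos
    exact ⟨Set.mem_Ioc.mpr ⟨Real.two_pi_pos, by linarith⟩, ⟨-1, by simp⟩⟩

lemma Dd_inj {p q r : ℝ × ℝ} (hq : N q = 1) (hr : N r = 1)
    (h : Dd p q = Dd p r) : q = r := by
  obtain ⟨k1, hk1⟩ := Dd_int p q
  obtain ⟨k2, hk2⟩ := Dd_int p r
  rw [h] at hk1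
  have hdiff : ang q - ang r = ((k1 - k2 : ℤ):ℝ) * (2*π) := by push_cast; linarith
  have hb1 : ang q - ang r < 2*π := by
    have := Complex.arg_le_pi (⟨q.1, q.2⟩ : ℂ)
    have := Complex.neg_pi_lt_arg (⟨r.1, r.2⟩ : ℂ)
    rw [ang, ang]; linarith
  have hb2 : -(2*π) < ang q - ang r := by
    have := Complex.arg_le_pi (⟨r.1, r.2⟩ : ℂ)
    have := Complex.neg_pi_lt_arg (⟨q.1, q.2⟩ : ℂ)
    rw [ang, ang]; linarith
  have hπ := Real.pi_pos
  have hk1' : ((k1 - k2 : ℤ):ℝ) < 1 := by push_cast; nlinarith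
  have hk2' : (-1:ℝ) < ((k1 - k2 : ℤ):ℝ) := by push_cast; nlinarith
  have e1 : (k1 - k2 : ℤ) < 1 := by exact_mod_cast hk1'
  have e2 : (-1:ℤ) < k1 - k2 := by exact_mod_cast hk2'
  have : k1 - k2 = 0 := by omega
  rw [this] at hdiff
  simp at hdiff
  exact ang_inj hN hq hr (by linarith)

end DdNorm

lemma Dd_add (p q r : ℝ × ℝ) :
    Dd p r = Dd p q + Dd q r ∨ Dd p r = Dd p q + Dd q r - 2*π := by
  obtain ⟨k1, hk1⟩ := Dd_int p q
  obtain ⟨k2, hk2⟩ := Dd_int q r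
  obtain ⟨k3, hk3⟩ := Dd_int p r
  have hsum : ang r - ang p = (ang q - ang p) + (ang r - ang q) := by ring
  rw [hk1, hk2, hk3] at hsum
  set K : ℤ := k3 - k1 - k2 with hK
  have hKeq : Dd p q + Dd q r - Dd p r = (K:ℝ) * (2*π) := by
    push_cast [hK]; linear_combination -hsum
  have h1 := Dd_mem p q
  have h2 := Dd_mem q r
  have h3 := Dd_mem p r
  have hπ := Real.pi_pos
  have hub : Dd p q + Dd q r - Dd p r < 4*π := by
    have := h1.2; have := h2.2; have := h3.1; linarith
  have hlb : -(2*π) < Dd p q + Dd q r - Dd p r := by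
    have := h1.1; have := h2.1; have := h3.2; linarith
  rw [hKeq] at hub hlb
  have hKlt : (K:ℝ) < 2 := by nlinarith
  have hKgt : (-1:ℝ) < (K:ℝ) := by nlinarith
  have e1 : K < 2 := by exact_mod_cast hKlt
  have e2 : (-1:ℤ) < K := by exact_mod_cast hKgt
  have hcase : K = 0 ∨ K = 1 := by omega
  rcases hcase with h | h
  · left
    rw [h] at hKeq; push_cast at hKeq; linarith
  · right
    rw [h] at hKeq; push_cast at hKeq; linarith

lemma Dd_self (p : ℝ × ℝ) : Dd p p = 2*π := by
  rw [Dd, sub_self, toIocMod_eq_iff]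
  have hπ := Real.pi_pos
  exact ⟨Set.mem_Ioc.mpr ⟨Real.two_pi_pos, by linarith⟩, ⟨-1, by simp⟩⟩

lemma Dd_sym {N : ℝ × ℝ → ℝ} (hN : IsNorm N) {p q : ℝ × ℝ}
    (hp : N p = 1) (hq : N q = 1) (hne : p ≠ q) : Dd p q + Dd q p = 2*π := by
  rcases Dd_add p q p with h | h
  · rw [Dd_self] at h; linarith
  · rw [Dd_self] at h
    have h1 := (Dd_mem p q).2
    have h2 := (Dd_mem q p).2
    have hpq : Dd p q = 2*π := by linarith
    exact absurd ((Dd_eq_two_pi_iff hN hp hq).mp hpq) hne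

end Angles

/-- If `u, v ∈ S` both generate finite ρ-polygons, then the polygons
have the same number of vertices (the minimal periods coincide). -/
theorem stmt_12 (N : ℝ × ℝ → ℝ) (hN : IsNorm N) (ρ : ℝ) (hρ0 : 0 < ρ) (hρ1 : ρ < 1)
    (star : ℝ × ℝ → ℝ × ℝ)
    (hstar : ∀ u : ℝ × ℝ, N u = 1 →
      (N (star u) = 1 ∧ 0 < wedge u (star u) ∧ segInf N u (star u) = ρ) ∧
      ∀ w : ℝ × ℝ, N w = 1 → 0 < wedge u w → segInf N u w = ρ → w = star u)
    (u v : ℝ × ℝ) (hu : N u = 1) (hv : N v = 1) (n m : ℕ) (hn : 0 < n) (hm : 0 < m)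
    (hpu : star^[n] u = u) (hnmin : ∀ i : ℕ, 0 < i → i < n → star^[i] u ≠ u)
    (hpv : star^[m] v = v) (hmmin : ∀ i : ℕ, 0 < i → i < m → star^[i] v ≠ v) :
    n = m := by
  classical
  have hπ := Real.pi_pos
  -- The union of both orbits
  set W : Finset (ℝ × ℝ) :=
    ((Finset.range n).image (fun i => star^[i] u)) ∪
    ((Finset.range m).image (fun j => star^[j] v)) with hWdef
  have hWmem : ∀ p, p ∈ W ↔ (∃ i < n, star^[i] u = p) ∨ (∃ j < m, star^[j] v = p) := by
    intro p
    simp [hWdef, Finset.mem_union, Finset.mem_image]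
  have huW : u ∈ W := (hWmem u).mpr (Or.inl ⟨0, hn, rfl⟩)
  have hvW : v ∈ W := (hWmem v).mpr (Or.inr ⟨0, hm, rfl⟩)
  have hNiter : ∀ (p : ℝ × ℝ), N p = 1 → ∀ i, N (star^[i] p) = 1 := by
    intro p hp i
    induction i with
    | zero => simpa
    | succ k ih =>
        rw [Function.iterate_succ_apply']
        exact ((hstar _ ih).1).1
  have hWS : ∀ p ∈ W, N p = 1 := by
    intro p hp
    rcases (hWmem p).1 hp with ⟨i, _, rfl⟩ | ⟨j, _, rfl⟩
    exacts [hNiter u hu i, hNiter v hv j]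
  have hWstar : ∀ p ∈ W, star p ∈ W := by
    intro p hp
    rcases (hWmem p).1 hp with ⟨i, hi, rfl⟩ | ⟨j, hj, rfl⟩
    · rcases eq_or_lt_of_le (Nat.succ_le_of_lt hi) with h | h
      · refine (hWmem _).mpr (Or.inl ⟨0, hn, ?_⟩)
        rw [← Function.iterate_succ_apply' star i u, h, hpu]
        rfl
      · exact (hWmem _).mpr (Or.inl ⟨i+1, h, (Function.iterate_succ_apply' star i u)⟩)
    · rcases eq_or_lt_of_le (Nat.succ_le_of_lt hj) with h | h
      · refine (hWmem _).mpr (Or.inr ⟨0, hm, ?_⟩)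
        rw [← Function.iterate_succ_apply' star j v, h, hpv]
        rfl
      · exact (hWmem _).mpr (Or.inr ⟨j+1, h, (Function.iterate_succ_apply' star j v)⟩)
  have hP : ∀ p ∈ W, star^[n*m] p = p := by
    intro p hp
    have hu' : star^[n*m] u = u := by
      rw [Function.iterate_mul]
      exact Function.iterate_fixed hpu m
    have hv' : star^[n*m] v = v := by
      rw [show n*m = m*n by ring, Function.iterate_mul]
      exact Function.iterate_fixed hpv n
    rcases (hWmem p).1 hp with ⟨i, _, rfl⟩ | ⟨j, _, rfl⟩
    · rw [← Function.iterate_add_apply, add_comm, Function.iterate_add_apply, hu']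
    · rw [← Function.iterate_add_apply, add_comm, Function.iterate_add_apply, hv']
  have hnm1 : 1 ≤ n * m := Nat.one_le_iff_ne_zero.mpr (by positivity)
  have hWinj : ∀ p ∈ W, ∀ q ∈ W, star p = star q → p = q := by
    intro p hp q hq h
    have h1 := hP p hp
    have h2 := hP q hq
    rw [show n*m = (n*m - 1) + 1 by omega, Function.iterate_succ_apply] at h1 h2
    rw [h] at h1
    exact h1.symm.trans h2
  have hne0 : ∀ p ∈ W, p ≠ 0 := fun p hp => N_one_ne_zero hN (hWS p hp)
  have hbr : ∀ p ∈ W, ∀ q ∈ W, (0 < wedge p q ↔ Dd p q < π) := by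
    intro p hp q hq
    exact wedge_pos_iff_Dd (hne0 p hp) (hne0 q hq)
  have hfD : ∀ p ∈ W, Dd p (star p) < π := by
    intro p hp
    exact (hbr p hp (star p) (hWstar p hp)).mp ((hstar p (hWS p hp)).1.2.1)
  have hfne : ∀ p ∈ W, star p ≠ p := by
    intro p hp h
    have hw := (hstar p (hWS p hp)).1.2.1
    rw [h] at hw
    have hz : wedge p p = 0 := by rw [wedge]; ring
    linarith
  have hML : ∀ p ∈ W, ∀ q ∈ W, 0 < wedge p q → 0 < wedge q (star p) →
      star q = star p ∨ 0 < wedge (star p) (star q) := by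
    intro p hp q hq h1 h2
    obtain ⟨⟨hsp1, hsp2, hsp3⟩, _⟩ := hstar p (hWS p hp)
    obtain ⟨⟨hsq1, hsq2, hsq3⟩, _⟩ := hstar q (hWS q hq)
    exact ML hN hρ0 hρ1 (hWS p hp) hsp1 hsp2 hsp3 (hWS q hq) hsq1 hsq2 hsq3 h1 h2
  -- the strict "gap" sets
  set T : (ℝ × ℝ) → Finset (ℝ × ℝ) :=
    fun p => W.filter (fun q => q ≠ p ∧ Dd p q < Dd p (star p)) with hTdef
  have hTmem : ∀ p q, q ∈ T p ↔ q ∈ W ∧ q ≠ p ∧ Dd p q < Dd p (star p) := by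
    intro p q
    simp [hTdef, Finset.mem_filter]
  have hTsub : ∀ p, T p ⊆ W := by
    intro p q hq
    exact ((hTmem p q).1 hq).1
  -- transport of the gap sets
  have hGT : ∀ p ∈ W, ∀ q ∈ T p, star q ∈ T (star p) := by
    intro p hp q hq
    obtain ⟨hqW, hqne, hqD⟩ := (hTmem p q).1 hq
    have hDpf : Dd p (star p) < π := hfD p hp
    have hspW := hWstar p hp
    have hwpq : 0 < wedge p q := (hbr p hp q hqW).mpr (lt_trans hqD hDpf)
    have hqf : Dd q (star p) = Dd p (star p) - Dd p q := by
      rcases Dd_add p q (star p) with h | h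
      · linarith
      · exfalso
        have h2 := (Dd_mem q (star p)).2
        have h1 := (Dd_mem p q).1
        linarith
    have hwqf : 0 < wedge q (star p) := by
      rw [hbr q hqW (star p) hspW, hqf]
      have := (Dd_mem p q).1
      linarith
    rcases hML p hp q hqW hwpq hwqf with heq | hlt
    · exact absurd (hWinj q hqW p hp heq) hqne
    rcases hML q hqW (star p) hspW hwqf hlt with heq2 | hlt2
    · exfalso
      have hspq : star p = q := hWinj (star p) hspW q hqW heq2
      rw [← hspq] at hqD
      exact lt_irrefl _ hqD
    refine (hTmem (star p) (star q)).2 ⟨hWstar q hqW, ?_, ?_⟩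
    · intro h
      exact hqne (hWinj q hqW p hp h)
    · have hD1 : Dd (star p) (star q) < π :=
        (hbr (star p) hspW (star q) (hWstar q hqW)).mp hlt
      have hD2 : Dd (star q) (star (star p)) < π :=
        (hbr (star q) (hWstar q hqW) (star (star p)) (hWstar _ hspW)).mp hlt2
      rcases Dd_add (star p) (star q) (star (star p)) with h | h
      · have := (Dd_mem (star q) (star (star p))).1
        linarith
      · exfalso
        have := (Dd_mem (star p) (star (star p))).1
        linarith
  have hWiter : ∀ p ∈ W, ∀ i, star^[i] p ∈ W := by
    intro p hp i
    induction i with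
    | zero => simpa
    | succ k ih =>
        rw [Function.iterate_succ_apply']
        exact hWstar _ ih
  have hTle : ∀ p ∈ W, (T p).card ≤ (T (star p)).card := by
    intro p hp
    apply Finset.card_le_card_of_injOn star (fun q hq => hGT p hp q hq)
    intro a ha b hb hab
    exact hWinj a (hTsub p ha) b (hTsub p hb) hab
  have hTiter : ∀ p ∈ W, ∀ i, (T p).card ≤ (T (star^[i] p)).card := by
    intro p hp i
    induction i with
    | zero => simp
    | succ k ih =>
        rw [Function.iterate_succ_apply']
        exact le_trans ih (hTle _ (hWiter p hp k))
  have hTeq : ∀ p ∈ W, (T p).card = (T (star p)).card := by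
    intro p hp
    refine le_antisymm (hTle p hp) ?_
    have h1 := hTiter (star p) (hWstar p hp) (n*m - 1)
    have h2 : star^[n*m - 1] (star p) = p := by
      rw [← Function.iterate_succ_apply, Nat.succ_eq_add_one,
        Nat.sub_add_cancel hnm1]
      exact hP p hp
    rwa [h2] at h1
  have hTsurj : ∀ p ∈ W, ∀ z ∈ T (star p), ∃ q ∈ T p, star q = z := by
    intro p hp z hz
    have hinj : Set.InjOn star (T p) := by
      intro a ha b hb hab
      exact hWinj a (hTsub p ha) b (hTsub p hb) hab
    have himg : (T p).image star = T (star p) := by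
      apply Finset.eq_of_subset_of_card_le
      · intro w hw
        obtain ⟨q, hq, rfl⟩ := Finset.mem_image.1 hw
        exact hGT p hp q hq
      · rw [Finset.card_image_of_injOn hinj]
        exact (hTeq p hp).ge
    rw [← himg] at hz
    obtain ⟨q, hq, hqz⟩ := Finset.mem_image.1 hz
    exact ⟨q, hq, hqz⟩
  -- sorting the points of W by angle
  set l : List (ℝ × ℝ) := W.toList.mergeSort (fun p q => decide (ang p ≤ ang q)) with hldef
  have hperm : l.Perm W.toList := List.mergeSort_perm W.toList _
  have hnodup : l.Nodup := hperm.nodup_iff.mpr W.nodup_toList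
  have hmem : ∀ x, x ∈ l ↔ x ∈ W := fun x => by rw [hperm.mem_iff, Finset.mem_toList]
  have hsorted : l.Pairwise (fun p q => ang p ≤ ang q) := by
    have h := List.pairwise_mergeSort (le := fun p q : ℝ × ℝ => decide (ang p ≤ ang q))
      (fun a b c h1 h2 => by
        simp only [decide_eq_true_eq] at *
        linarith)
      (fun a b => by simpa using le_total (ang a) (ang b)) W.toList
    rw [← hldef] at h
    exact List.Pairwise.imp (fun hab => by simpa using hab) h
  set L := l.length with hLdef
  have hL2 : 2 ≤ L := by
    have hcard : 1 < W.card := by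
      apply Finset.one_lt_card.mpr
      exact ⟨u, huW, star u, hWstar u huW, (hfne u huW).symm⟩
    rw [hLdef, hperm.length_eq, Finset.length_toList]
    exact hcard
  have hLpos : 0 < L := by omega
  have hgetW : ∀ i (hi : i < L), l[i] ∈ W := by
    intro i hi
    exact (hmem _).1 (List.getElem_mem hi)
  have hangmono : ∀ i j (hi : i < L) (hj : j < L), i < j → ang l[i] < ang l[j] := by
    intro i j hi hj hij
    have hle := List.pairwise_iff_getElem.mp hsorted i j hi hj hij
    rcases eq_or_lt_of_le hle with h | h
    · exfalso
      have heq : l[i] = l[j] :=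
        ang_inj hN (hWS _ (hgetW i hi)) (hWS _ (hgetW j hj)) h
      rw [hnodup.getElem_inj_iff] at heq
      omega
    · exact h
  have hangb : ∀ p : ℝ × ℝ, -π < ang p ∧ ang p ≤ π := by
    intro p
    exact ⟨Complex.neg_pi_lt_arg _, Complex.arg_le_pi _⟩
  have hidx : ∀ x ∈ W, ∃ i, ∃ (hi : i < L), l[i] = x := by
    intro x hx
    obtain ⟨i, hi, h⟩ := List.getElem_of_mem ((hmem x).mpr hx)
    exact ⟨i, hi, h⟩
  set σ := l.formPerm with hσdef
  have hσ_get : ∀ i (hi : i < L), σ l[i] = l[(i+1) % L]'(Nat.mod_lt _ hLpos) := by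
    intro i hi
    exact List.formPerm_apply_getElem l hnodup i hi
  have hσpow : ∀ (k i : ℕ) (hi : i < L), (σ ^ k) l[i] = l[(i+k) % L]'(Nat.mod_lt _ hLpos) := by
    intro k i hi
    exact List.formPerm_pow_apply_getElem l hnodup k i hi
  have hσW : ∀ x ∈ W, σ x ∈ W := by
    intro x hx
    obtain ⟨i, hi, rfl⟩ := hidx x hx
    rw [hσ_get i hi]
    exact hgetW _ _
  have hσpowW : ∀ (k : ℕ), ∀ x ∈ W, (σ ^ k) x ∈ W := by
    intro k x hx
    obtain ⟨i, hi, rfl⟩ := hidx x hx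
    rw [hσpow k i hi]
    exact hgetW _ _
  have hσnefix : ∀ x ∈ W, σ x ≠ x := by
    intro x hx h
    obtain ⟨i, hi, rfl⟩ := hidx x hx
    rw [hσ_get i hi, hnodup.getElem_inj_iff] at h
    rcases Nat.lt_or_ge (i+1) L with hlt | hge
    · rw [Nat.mod_eq_of_lt hlt] at h
      omega
    · have hiL : i + 1 = L := by omega
      rw [hiL, Nat.mod_self] at h
      omega
  -- Dd formulas on the sorted list
  have hDlt : ∀ i j (hi : i < L) (hj : j < L), i < j →
      Dd l[i] l[j] = ang l[j] - ang l[i] := by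
    intro i j hi hj hij
    rw [Dd, toIocMod_eq_self]
    have h1 := hangmono i j hi hj hij
    have h2 := (hangb l[i]).1
    have h3 := (hangb l[j]).2
    exact Set.mem_Ioc.mpr ⟨by linarith, by linarith⟩
  have hDgt : ∀ i j (hi : i < L) (hj : j < L), j < i →
      Dd l[i] l[j] = ang l[j] - ang l[i] + 2*π := by
    intro i j hi hj hij
    rw [Dd, toIocMod_eq_iff]
    have h1 := hangmono j i hj hi hij
    have h2 := (hangb l[j]).1
    have h3 := (hangb l[i]).2
    refine ⟨Set.mem_Ioc.mpr ⟨by linarith, by linarith⟩, ⟨-1, ?_⟩⟩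
    simp only [zsmul_eq_mul]
    push_cast
    ring
  -- minimality property of σ
  have hmin : ∀ x ∈ W, ∀ z ∈ W, z ≠ x → Dd x (σ x) ≤ Dd x z := by
    intro x hx z hz hzx
    obtain ⟨i, hi, rfl⟩ := hidx x hx
    obtain ⟨j, hj, rfl⟩ := hidx z hz
    have hij : j ≠ i := fun h => hzx (hnodup.getElem_inj_iff.mpr h)
    rw [hσ_get i hi]
    rcases Nat.lt_or_ge (i+1) L with hlt | hge
    · have hmod : (i+1) % L = i + 1 := Nat.mod_eq_of_lt hlt
      rcases Nat.lt_or_ge i j with hij2 | hij2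
      · have e1 : Dd l[i] (l[(i+1)%L]'(Nat.mod_lt _ hLpos)) = ang (l[(i+1)%L]'(Nat.mod_lt _ hLpos)) - ang l[i] := hDlt i ((i+1)%L) hi (Nat.mod_lt _ hLpos) (by omega)
        have e2 : Dd l[i] l[j] = ang l[j] - ang l[i] := hDlt i j hi hj hij2
        rw [e1, e2]
        have : ang (l[(i+1)%L]'(Nat.mod_lt _ hLpos)) ≤ ang l[j] := by
          rcases eq_or_lt_of_le (Nat.succ_le_of_lt hij2) with h | h
          · have hidxe : (i+1) % L = j := by omega
            have heq : (l[(i+1)%L]'(Nat.mod_lt _ hLpos)) = l[j] :=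
              hnodup.getElem_inj_iff.mpr hidxe
            rw [heq]
          · have := hangmono ((i+1)%L) j (Nat.mod_lt _ hLpos) hj (by omega)
            linarith
        linarith
      · have hji : j < i := by omega
        have e1 : Dd l[i] (l[(i+1)%L]'(Nat.mod_lt _ hLpos)) = ang (l[(i+1)%L]'(Nat.mod_lt _ hLpos)) - ang l[i] := hDlt i ((i+1)%L) hi (Nat.mod_lt _ hLpos) (by omega)
        have e2 : Dd l[i] l[j] = ang l[j] - ang l[i] + 2*π := hDgt i j hi hj hji
        rw [e1, e2]
        have b1 := (hangb (l[(i+1)%L]'(Nat.mod_lt _ hLpos))).2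
        have b2 := (hangb l[j]).1
        linarith
    · have hiL : i + 1 = L := by omega
      have hmod : (i+1) % L = 0 := by rw [hiL, Nat.mod_self]
      have hji : j < i := by omega
      rcases Nat.eq_zero_or_pos j with hj0 | hj0
      · have heq : (l[(i+1)%L]'(Nat.mod_lt _ hLpos)) = l[j] :=
          hnodup.getElem_inj_iff.mpr (by omega)
        rw [heq]
      · have e1 : Dd l[i] (l[(i+1)%L]'(Nat.mod_lt _ hLpos)) = ang (l[(i+1)%L]'(Nat.mod_lt _ hLpos)) - ang l[i] + 2*π := hDgt i ((i+1)%L) hi (Nat.mod_lt _ hLpos) (by omega)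
        have e2 : Dd l[i] l[j] = ang l[j] - ang l[i] + 2*π := hDgt i j hi hj hji
        rw [e1, e2]
        have : ang (l[(i+1)%L]'(Nat.mod_lt _ hLpos)) ≤ ang l[j] := by
          have h0 : (i+1) % L = 0 := hmod
          have := hangmono ((i+1)%L) j (Nat.mod_lt _ hLpos) hj (by omega)
          linarith
        linarith
  -- uniqueness of the minimizer: it is σ
  have huniq : ∀ x ∈ W, ∀ y ∈ W, y ≠ x →
      (∀ z ∈ W, z ≠ x → Dd x y ≤ Dd x z) → y = σ x := by
    intro x hx y hy hyne hymin
    have hσx : σ x ∈ W := hσW x hx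
    have hσne : σ x ≠ x := hσnefix x hx
    have h1 := hymin (σ x) hσx hσne
    have h2 := hmin x hx y hy hyne
    exact Dd_inj hN (hWS y hy) (hWS (σ x) hσx) (le_antisymm h1 h2)
  -- the key commutation : star ∘ σ = σ ∘ star on W
  have hcomm : ∀ x ∈ W, star (σ x) = σ (star x) := by
    intro x hx
    set y := σ x with hy
    have hyW : y ∈ W := hσW x hx
    have hyne : y ≠ x := hσnefix x hx
    have hfxW : star x ∈ W := hWstar x hx
    have hfxne : star x ≠ x := hfne x hx
    have hfyW : star y ∈ W := hWstar y hyW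
    have hDxy_le : Dd x y ≤ Dd x (star x) := hmin x hx (star x) hfxW hfxne
    apply huniq (star x) hfxW (star y) hfyW
    · intro h
      exact hyne (hWinj y hyW x hx h)
    · intro z hz hzne
      by_contra hcon
      push_neg at hcon
      rcases eq_or_ne y (star x) with hyfx | hyfx
      · -- Case A : σ x = star x
        have hzT : z ∈ T (star x) := by
          refine (hTmem (star x) z).2 ⟨hz, hzne, ?_⟩
          have hssx : star (star x) = star y := by rw [hyfx]
          rw [hssx]
          exact hcon
        obtain ⟨q, hqT, hqz⟩ := hTsurj x hx z hzT
        obtain ⟨hqW, hqne, hqD⟩ := (hTmem x q).1 hqT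
        have hminq := hmin x hx q hqW hqne
        have hsxσ : star x = σ x := hyfx.symm.trans hy
        rw [hsxσ] at hqD
        linarith
      · -- Case B : σ x strictly inside (x, star x)
        have hDxy_lt : Dd x y < Dd x (star x) :=
          lt_of_le_of_ne hDxy_le
            (fun h => hyfx (Dd_inj hN (hWS y hyW) (hWS _ hfxW) h))
        have hyT : y ∈ T x := (hTmem x y).2 ⟨hyW, hyne, hDxy_lt⟩
        have hfyT := hGT x hx y hyT
        obtain ⟨_, hfyne, hfyD⟩ := (hTmem (star x) (star y)).1 hfyT
        have hzT : z ∈ T (star x) :=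
          (hTmem (star x) z).2 ⟨hz, hzne, lt_trans hcon hfyD⟩
        obtain ⟨q, hqT, hqz⟩ := hTsurj x hx z hzT
        obtain ⟨hqW, hqne, hqD⟩ := (hTmem x q).1 hqT
        have hqney : q ≠ y := by
          intro h
          rw [h] at hqz
          rw [← hqz] at hcon
          exact lt_irrefl _ hcon
        have hy_lt_q : Dd x y < Dd x q := by
          refine lt_of_le_of_ne (hmin x hx q hqW hqne) ?_
          intro h
          exact hqney (Dd_inj hN (hWS y hyW) (hWS q hqW) h).symm
        have hDyq : Dd y q = Dd x q - Dd x y := by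
          rcases Dd_add x y q with h | h
          · linarith
          · exfalso
            have := (Dd_mem y q).2
            linarith
        have hDyfx : Dd y (star x) = Dd x (star x) - Dd x y := by
          rcases Dd_add x y (star x) with h | h
          · linarith
          · exfalso
            have := (Dd_mem y (star x)).2
            linarith
        have hDsxsy_pi : Dd (star x) (star y) < π := lt_trans hfyD (hfD (star x) hfxW)
        have hDyfy : Dd y (star y) = Dd y (star x) + Dd (star x) (star y) := by
          rcases Dd_add y (star x) (star y) with h | h
          · exact h
          · exfalso
            have h1 : Dd y (star x) < π := by
              rw [hDyfx]
              have := hfD x hx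
              have := (Dd_mem x y).1
              linarith
            have := (Dd_mem y (star y)).1
            linarith
        have hqTy : q ∈ T y := by
          refine (hTmem y q).2 ⟨hqW, hqney, ?_⟩
          rw [hDyq, hDyfy, hDyfx]
          have := (Dd_mem (star x) (star y)).1
          linarith
        have hfqT := hGT y hyW q hqTy
        obtain ⟨_, _, hfqD⟩ := (hTmem (star y) (star q)).1 hfqT
        have hfq_lt_pi : Dd (star y) z < π := by
          rw [← hqz]
          exact lt_trans hfqD (hfD (star y) hfyW)
        have hzneq_sy : z ≠ star y := by
          intro h
          rw [h] at hcon
          exact lt_irrefl _ hcon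
        have hDzsy : Dd z (star y) = Dd (star x) (star y) - Dd (star x) z := by
          rcases Dd_add (star x) z (star y) with h | h
          · linarith
          · exfalso
            have := (Dd_mem z (star y)).2
            linarith
        have hsym := Dd_sym hN (hWS z hz) (hWS (star y) hfyW) hzneq_sy
        have hfinal : π < Dd (star y) z := by
          have h1 := (Dd_mem (star x) z).1
          rw [hDzsy] at hsym
          linarith
        linarith
  -- index bookkeeping
  have hmodidx : ∀ a b : ℕ, a < L → b < L → (a + (b + L - a) % L) % L = b := by
    intro a b ha hb
    have h1 : (a + (b + L - a) % L) % L = (a + (b + L - a)) % L := by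
      have := (Nat.mod_modEq (b + L - a) L).add_left a
      exact this
    rw [h1, show a + (b + L - a) = b + L by omega, Nat.add_mod_right,
      Nat.mod_eq_of_lt hb]
  obtain ⟨iu, hiu, hiueq⟩ := hidx u huW
  obtain ⟨ifu, hifu, hifueq⟩ := hidx (star u) (hWstar u huW)
  set R : ℕ := (ifu + L - iu) % L with hRdef
  have hR : (σ ^ R) u = star u := by
    rw [← hifueq, ← hiueq, hσpow R iu hiu]
    exact hnodup.getElem_inj_iff.mpr (hmodidx iu ifu hiu hifu)
  have hcommiter : ∀ k : ℕ, ∀ w ∈ W, star ((σ^k) w) = (σ^k) (star w) := by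
    intro k
    induction k with
    | zero => intro w _; simp
    | succ t ih =>
        intro w hw
        rw [pow_succ, Equiv.Perm.mul_apply, Equiv.Perm.mul_apply,
          ← hcomm w hw]
        exact ih (σ w) (hσW w hw)
  have htrans : ∀ x ∈ W, star x = (σ ^ R) x := by
    intro x hx
    obtain ⟨ix, hix, rfl⟩ := hidx x hx
    set j : ℕ := (ix + L - iu) % L with hjdef
    have hxj : (σ ^ j) u = l[ix] := by
      rw [← hiueq, hσpow j iu hiu]
      exact hnodup.getElem_inj_iff.mpr (hmodidx iu ix hiu hix)
    calc star l[ix] = star ((σ^j) u) := by rw [hxj]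
      _ = (σ^j) (star u) := hcommiter j u huW
      _ = (σ^j) ((σ^R) u) := by rw [hR]
      _ = (σ^R) ((σ^j) u) := by
          rw [← Equiv.Perm.mul_apply, ← Equiv.Perm.mul_apply, pow_mul_comm]
      _ = (σ^R) l[ix] := by rw [hxj]
  have hiter : ∀ t : ℕ, ∀ x ∈ W, star^[t] x = (σ ^ (R*t)) x := by
    intro t
    induction t with
    | zero => intro x _; simp
    | succ k ih =>
        intro x hx
        rw [Function.iterate_succ_apply', ih x hx,
          htrans _ (hσpowW (R*k) x hx), ← Equiv.Perm.mul_apply, ← pow_add]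
        congr 2
        ring
  have hfix : ∀ x ∈ W, ∀ s : ℕ, ((σ ^ s) x = x ↔ L ∣ s) := by
    intro x hx s
    obtain ⟨ix, hix, rfl⟩ := hidx x hx
    rw [hσpow s ix hix]
    constructor
    · intro h
      have hidxeq : (ix + s) % L = ix := hnodup.getElem_inj_iff.mp h
      have hmeq : (ix + s) % L = ix % L := by
        rw [hidxeq, Nat.mod_eq_of_lt hix]
      have hMEQ : ix ≡ ix + s [MOD L] := hmeq.symm
      have := (Nat.modEq_iff_dvd' (Nat.le_add_right ix s)).mp hMEQ
      simpa using this
    · rintro ⟨c, rfl⟩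
      apply hnodup.getElem_inj_iff.mpr
      rw [Nat.add_mul_mod_self_left, Nat.mod_eq_of_lt hix]
  have hdvd_n : L ∣ R * n := by
    apply (hfix u huW (R*n)).mp
    rw [← hiter n u huW, hpu]
  have hdvd_m : L ∣ R * m := by
    apply (hfix v hvW (R*m)).mp
    rw [← hiter m v hvW, hpv]
  rcases lt_trichotomy n m with hlt | heq | hgt
  · exfalso
    apply hmmin n hn hlt
    rw [hiter n v hvW]
    exact (hfix v hvW (R*n)).mpr hdvd_n
  · exact heq
  · exfalso
    apply hnmin m hm hgt
    rw [hiter m u huW]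
    exact (hfix u huW (R*m)).mpr hdvd_m
end

section
/- Let X be a two-dimensional real normed space satisfying property (P-ρS) for some 0 < ρ < 1, and let s: [0,2π] → S, s(θ) = (cos θ, sin θ)/‖(cos θ, sin θ)‖, be the natural parametrization of the unit sphere, with s⊥(θ) ∈ S the unit vector Birkhoff-orthogonal to s(θ) with s(θ) ≺ s⊥(θ). Then for any 0 ≤ α < β ≤ 2π, the Riemann–Stieltjes integral ∫_α^β μ(θ) s⊥(θ) ∧ ds(θ) = 0, where μ(θ) > 0 is the unique number with ρ(s(θ) ± μ(θ)s⊥(θ)) ∈ S, and x ∧ y = x₁y₂ − x₂y₁. -/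
open Real Set

/-- `HasRSIntegral F G a b I` says the Riemann–Stieltjes integral
`∫_a^b F(θ) ∧ dG(θ)` exists and equals `I`: Riemann–Stieltjes sums over tagged
partitions of `[a,b]` with small mesh are close to `I`. -/
def HasRSIntegral (F G : ℝ → ℝ × ℝ) (a b I : ℝ) : Prop :=
  ∀ ε > (0:ℝ), ∃ δ > (0:ℝ), ∀ (n : ℕ) (t τ : ℕ → ℝ), 0 < n →
    t 0 = a → t n = b →
    (∀ i < n, t i ≤ τ i ∧ τ i ≤ t (i + 1) ∧ t i ≤ t (i + 1) ∧ t (i + 1) - t i < δ) →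
    |(∑ i ∈ Finset.range n, wedge (F (τ i)) (G (t (i + 1)) - G (t i))) - I| < ε

section Aux13




lemma wedge_smul_left' (a : ℝ) (x y : ℝ × ℝ) : wedge (a • x) y = a * wedge x y := by
  simp only [wedge, Prod.smul_fst, Prod.smul_snd, smul_eq_mul]; ring

lemma wedge_sub_right' (x y z : ℝ × ℝ) : wedge x (y - z) = wedge x y - wedge x z := by
  simp only [wedge, Prod.fst_sub, Prod.snd_sub]; ring

lemma wedge_anti' (x y : ℝ × ℝ) : wedge x y = -wedge y x := by
  simp only [wedge]; ring

lemma wedge_neg_right' (x y : ℝ × ℝ) : wedge x (-y) = -wedge x y := by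
  simp only [wedge, Prod.fst_neg, Prod.snd_neg]; ring

lemma IsNorm.zero' {N : ℝ × ℝ → ℝ} (hN : IsNorm N) : N 0 = 0 := (hN.1 0).mpr rfl

lemma IsNorm.neg' {N : ℝ × ℝ → ℝ} (hN : IsNorm N) (x : ℝ × ℝ) : N (-x) = N x := by
  have h := hN.2.1 (-1) x
  simpa using h

lemma IsNorm.nonneg' {N : ℝ × ℝ → ℝ} (hN : IsNorm N) (x : ℝ × ℝ) : 0 ≤ N x := by
  have h := hN.2.2 x (-x)
  rw [add_neg_cancel, hN.zero', hN.neg'] at h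
  linarith

lemma IsNorm.sub_abs_le {N : ℝ × ℝ → ℝ} (hN : IsNorm N) (x y : ℝ × ℝ) :
    |N x - N y| ≤ N (x - y) := by
  have h1 := hN.2.2 (x - y) y
  rw [sub_add_cancel] at h1
  have h2 := hN.2.2 (y - x) x
  rw [sub_add_cancel] at h2
  have h3 : N (y - x) = N (x - y) := by
    rw [← hN.neg' (y - x), neg_sub]
  rw [abs_sub_le_iff]
  constructor <;> linarith

lemma IsNorm.exists_bounds {N : ℝ × ℝ → ℝ} (hN : IsNorm N) :
    ∃ cl cu : ℝ, 0 < cl ∧ 0 < cu ∧ ∀ x : ℝ × ℝ, cl * ‖x‖ ≤ N x ∧ N x ≤ cu * ‖x‖ := by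
  obtain ⟨h0, hsmul, hadd⟩ := hN
  have hN' : IsNorm N := ⟨h0, hsmul, hadd⟩
  set cu := N (1, 0) + N (0, 1) + 1 with hcu_def
  have h10 : 0 ≤ N (1,0) := hN'.nonneg' _
  have h01 : 0 ≤ N (0,1) := hN'.nonneg' _
  have hcu : 0 < cu := by rw [hcu_def]; linarith
  have hupper : ∀ x : ℝ × ℝ, N x ≤ cu * ‖x‖ := by
    intro x
    have hx : x = x.1 • ((1:ℝ),(0:ℝ)) + x.2 • ((0:ℝ),(1:ℝ)) := by
      ext <;> simp
    have h1 : |x.1| ≤ ‖x‖ := by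
      have := norm_fst_le x; rwa [Real.norm_eq_abs] at this
    have h2 : |x.2| ≤ ‖x‖ := by
      have := norm_snd_le x; rwa [Real.norm_eq_abs] at this
    calc N x = N (x.1 • ((1:ℝ),(0:ℝ)) + x.2 • ((0:ℝ),(1:ℝ))) := by rw [← hx]
    _ ≤ N (x.1 • ((1:ℝ),(0:ℝ))) + N (x.2 • ((0:ℝ),(1:ℝ))) := hadd _ _
    _ = |x.1| * N (1,0) + |x.2| * N (0,1) := by rw [hsmul, hsmul]
    _ ≤ cu * ‖x‖ := by nlinarith [norm_nonneg x, abs_nonneg x.1, abs_nonneg x.2]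
  have hlip : LipschitzWith (Real.toNNReal cu) N := by
    apply LipschitzWith.of_dist_le_mul
    intro x y
    rw [Real.dist_eq, dist_eq_norm]
    calc |N x - N y| ≤ N (x - y) := hN'.sub_abs_le x y
    _ ≤ cu * ‖x - y‖ := hupper _
    _ = (Real.toNNReal cu : ℝ) * ‖x - y‖ := by
        rw [Real.coe_toNNReal cu hcu.le]
  obtain ⟨z, hz, hzmin'⟩ := (isCompact_sphere (0 : ℝ × ℝ) 1).exists_isMinOn
    ⟨((1:ℝ),(0:ℝ)), by simp [mem_sphere_zero_iff_norm, Prod.norm_def]⟩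
    hlip.continuous.continuousOn
  have hzmin : ∀ y ∈ Metric.sphere (0:ℝ×ℝ) 1, N z ≤ N y := fun y hy => hzmin' hy
  rw [mem_sphere_zero_iff_norm] at hz
  have hz0 : z ≠ 0 := by
    intro h; rw [h] at hz; simp at hz
  have hzpos : 0 < N z := by
    rcases (hN'.nonneg' z).lt_or_eq with h | h
    · exact h
    · exact absurd ((h0 z).mp h.symm) hz0
  refine ⟨N z, cu, hzpos, hcu, fun x => ⟨?_, hupper x⟩⟩
  by_cases hx0 : x = 0
  · simp [hx0, hN'.zero']
  · have hnx : 0 < ‖x‖ := norm_pos_iff.mpr hx0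
    have hy : (‖x‖⁻¹ • x) ∈ Metric.sphere (0:ℝ×ℝ) 1 := by
      rw [mem_sphere_zero_iff_norm, norm_smul, Real.norm_eq_abs, abs_inv, abs_norm]
      field_simp
    have hmin := hzmin _ hy
    rw [mem_sphere_zero_iff_norm] at hy
    have heq : N (‖x‖⁻¹ • x) = ‖x‖⁻¹ * N x := by
      rw [hsmul, abs_inv, abs_norm]
    rw [heq] at hmin
    have := mul_le_mul_of_nonneg_right hmin hnx.le
    calc N z * ‖x‖ ≤ ‖x‖⁻¹ * N x * ‖x‖ := this
    _ = N x := by field_simp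

lemma support_max {N : ℝ × ℝ → ℝ} (hN : IsNorm N) (p v : ℝ × ℝ)
    (hp1 : N p = 1) (hw : 0 < wedge p v)
    (hsupp : ∀ l : ℝ, N p ≤ N (p + l • v)) (x : ℝ × ℝ) (hx : N x ≤ 1) :
    wedge x v ≤ wedge p v := by
  by_contra hcon
  push_neg at hcon
  have hWpos : 0 < wedge x v := lt_trans hw hcon
  set tt := wedge p v / wedge x v with htt
  have htt0 : 0 < tt := div_pos hw hWpos
  have htt1 : tt < 1 := (div_lt_one hWpos).mpr hcon
  set z := tt • x with hz
  have hNz : N z < 1 := by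
    rw [hz, hN.2.1, abs_of_pos htt0]
    nlinarith [hN.nonneg' x]
  have hwz : wedge z v = wedge p v := by
    rw [hz, wedge_smul_left', htt]
    field_simp
  have hpar : wedge (z - p) v = 0 := by
    have h : wedge (z - p) v = wedge z v - wedge p v := by
      simp only [wedge, Prod.fst_sub, Prod.snd_sub]; ring
    rw [h, hwz, sub_self]
  have hv0 : v ≠ 0 := by
    intro h; rw [h] at hw; simp [wedge] at hw
  obtain ⟨l, hl⟩ : ∃ l : ℝ, z - p = l • v := by
    by_cases hv1 : v.1 = 0
    · have hv2 : v.2 ≠ 0 := by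
        intro h2; apply hv0; ext <;> simp [hv1, h2]
      have h1 : (z - p).1 = 0 := by
        have h2 : (z - p).1 * v.2 - (z - p).2 * v.1 = 0 := hpar
        rw [hv1, mul_zero, sub_zero] at h2
        exact (mul_eq_zero.mp h2).resolve_right hv2
      refine ⟨(z - p).2 / v.2, ?_⟩
      have e2 : (z - p).2 / v.2 * v.2 = (z - p).2 := div_mul_cancel₀ _ hv2
      ext
      · simp only [Prod.smul_fst, smul_eq_mul, Prod.fst_sub] at *
        rw [hv1, mul_zero]; linarith [h1]
      · simp only [Prod.smul_snd, smul_eq_mul, Prod.snd_sub] at *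
        linarith [e2]
    · refine ⟨(z - p).1 / v.1, ?_⟩
      have hkey : (z - p).1 * v.2 = (z - p).2 * v.1 := by
        have h2 : (z - p).1 * v.2 - (z - p).2 * v.1 = 0 := hpar
        linarith
      have e1 : (z - p).1 / v.1 * v.1 = (z - p).1 := div_mul_cancel₀ _ hv1
      have e2 : (z - p).1 / v.1 * v.2 = (z - p).2 := by
        rw [div_mul_eq_mul_div, hkey, mul_div_assoc, div_self hv1, mul_one]
      ext
      · simp only [Prod.smul_fst, smul_eq_mul, Prod.fst_sub] at *
        linarith [e1]
      · simp only [Prod.smul_snd, smul_eq_mul, Prod.snd_sub] at *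
        linarith [e2]
  have hfin : N p ≤ N z := by
    have h := hsupp l
    rw [← hl, add_sub_cancel] at h
    exact h
  rw [hp1] at hfin
  linarith




lemma cos_lip' (a b : ℝ) : |Real.cos a - Real.cos b| ≤ |a - b| := by
  rw [Real.cos_sub_cos]
  calc |(-2) * Real.sin ((a+b)/2) * Real.sin ((a-b)/2)|
      = 2 * |Real.sin ((a+b)/2)| * |Real.sin ((a-b)/2)| := by
        rw [abs_mul, abs_mul, abs_neg]; norm_num
  _ ≤ 2 * 1 * |(a-b)/2| := by
      have h1 := Real.abs_sin_le_one ((a+b)/2)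
      have h2 := Real.abs_sin_le_abs (x := (a-b)/2)
      have h3 := abs_nonneg (Real.sin ((a-b)/2))
      nlinarith [abs_nonneg ((a-b)/2)]
  _ = |a - b| := by rw [abs_div, abs_two]; ring

lemma sin_lip' (a b : ℝ) : |Real.sin a - Real.sin b| ≤ |a - b| := by
  rw [Real.sin_sub_sin]
  calc |2 * Real.sin ((a-b)/2) * Real.cos ((a+b)/2)|
      = 2 * |Real.sin ((a-b)/2)| * |Real.cos ((a+b)/2)| := by
        rw [abs_mul, abs_mul]; norm_num
  _ ≤ 2 * |(a-b)/2| * 1 := by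
      have h1 := Real.abs_cos_le_one ((a+b)/2)
      have h2 := Real.abs_sin_le_abs (x := (a-b)/2)
      have h3 := abs_nonneg (Real.cos ((a+b)/2))
      nlinarith [abs_nonneg ((a-b)/2), abs_nonneg (Real.sin ((a-b)/2))]
  _ = |a - b| := by rw [abs_div, abs_two]; ring

lemma wedge_abs_le' (v c : ℝ × ℝ) (Mv : ℝ) (h1 : |v.1| ≤ Mv) (h2 : |v.2| ≤ Mv) :
    |wedge v c| ≤ Mv * (|c.1| + |c.2|) := by
  simp only [wedge]
  calc |v.1 * c.2 - v.2 * c.1| ≤ |v.1 * c.2| + |v.2 * c.1| := abs_sub _ _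
  _ = |v.1| * |c.2| + |v.2| * |c.1| := by rw [abs_mul, abs_mul]
  _ ≤ Mv * (|c.1| + |c.2|) := by nlinarith [abs_nonneg c.1, abs_nonneg c.2, abs_nonneg v.1, abs_nonneg v.2]

lemma polar_exists (θ : ℝ) (v : ℝ × ℝ) (hy : 0 < Real.cos θ * v.2 - Real.sin θ * v.1) :
    ∃ E φ' : ℝ, 0 < E ∧ E ≤ |v.1| + |v.2| ∧ θ < φ' ∧ φ' < θ + π ∧
      v = E • ((Real.cos φ', Real.sin φ') : ℝ × ℝ) := by
  set x := Real.cos θ * v.1 + Real.sin θ * v.2 with hx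
  set y := Real.cos θ * v.2 - Real.sin θ * v.1 with hy2
  have hpy : Real.sin θ ^ 2 + Real.cos θ ^ 2 = 1 := Real.sin_sq_add_cos_sq θ
  have hsum : x^2 + y^2 = v.1^2 + v.2^2 := by
    rw [hx, hy2]; linear_combination (v.1^2 + v.2^2) * hpy
  set E := Real.sqrt (x^2 + y^2) with hE
  have hE2 : E^2 = x^2 + y^2 := Real.sq_sqrt (by positivity)
  have hEpos : 0 < E := Real.sqrt_pos.mpr (by nlinarith [sq_nonneg x])
  have hxlt : |x| < E := by
    rw [← Real.sqrt_sq_eq_abs, hE]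
    exact Real.sqrt_lt_sqrt (sq_nonneg x) (by nlinarith)
  have hx1 : -1 ≤ x / E := by
    rw [le_div_iff₀ hEpos]
    have := neg_abs_le x
    linarith
  have hx2 : x / E ≤ 1 := by
    rw [div_le_one hEpos]
    have := le_abs_self x
    linarith
  set a := Real.arccos (x/E) with ha
  have hcosa : Real.cos a = x/E := Real.cos_arccos hx1 hx2
  have hsina : Real.sin a = y/E := by
    rw [ha, Real.sin_arccos]
    have hyE : 0 ≤ y/E := by positivity
    have hq : 1 - (x/E)^2 = (y/E)^2 := by
      field_simp
      linarith [hE2]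
    rw [hq, Real.sqrt_sq hyE]
  have hapos : 0 < a := Real.arccos_pos.mpr (by
    rw [div_lt_one hEpos]
    have := le_abs_self x
    linarith)
  have hapi : a < π := by
    rcases lt_or_eq_of_le (Real.arccos_le_pi (x/E)) with h | h
    · exact h
    · exfalso
      have := Real.arccos_eq_pi.mp h
      have h2 : x/E < -1 ∨ x/E = -1 := lt_or_eq_of_le this
      rcases h2 with h2 | h2
      · linarith
      · have : x = -E := by field_simp at h2; linarith
        rw [this] at hxlt
        rw [abs_neg, abs_of_pos hEpos] at hxlt
        linarith
  refine ⟨E, θ + a, hEpos, ?_, by linarith, by linarith, ?_⟩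
  · have h1 : E = Real.sqrt (v.1^2 + v.2^2) := by rw [hE, hsum]
    rw [h1]
    have h2 : v.1^2 + v.2^2 ≤ (|v.1| + |v.2|)^2 := by
      nlinarith [abs_nonneg v.1, abs_nonneg v.2, sq_abs v.1, sq_abs v.2,
        mul_nonneg (abs_nonneg v.1) (abs_nonneg v.2)]
    calc Real.sqrt (v.1^2+v.2^2) ≤ Real.sqrt ((|v.1|+|v.2|)^2) := Real.sqrt_le_sqrt h2
    _ = |v.1|+|v.2| := Real.sqrt_sq (by positivity)
  · have hEne : E ≠ 0 := ne_of_gt hEpos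
    have c1 : E * Real.cos (θ + a) = v.1 := by
      rw [Real.cos_add, hcosa, hsina]
      field_simp
      rw [hx, hy2]
      linear_combination v.1 * hpy
    have c2 : E * Real.sin (θ + a) = v.2 := by
      rw [Real.sin_add, hcosa, hsina]
      field_simp
      rw [hx, hy2]
      linear_combination v.2 * hpy
    have : (E • ((Real.cos (θ+a), Real.sin (θ+a)) : ℝ × ℝ)) = (E * Real.cos (θ+a), E * Real.sin (θ+a)) := rfl
    rw [this, c1, c2]

lemma mono_aux (θ1 θ2 φ1 φ2 r1 r2 E1 E2 : ℝ)
    (hθ : θ1 < θ2) (hθπ : θ2 < θ1 + π)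
    (h1l : θ1 < φ1) (h1u : φ1 < θ1 + π) (h2l : θ2 < φ2) (h2u : φ2 < θ2 + π)
    (hr1 : 0 < r1) (hr2 : 0 < r2) (hE1 : 0 < E1) (hE2 : 0 < E2)
    (I1 : 0 ≤ wedge (E1 • ((Real.cos φ1, Real.sin φ1) : ℝ × ℝ))
      (r2 • ((Real.cos θ2, Real.sin θ2) : ℝ × ℝ) - r1 • ((Real.cos θ1, Real.sin θ1) : ℝ × ℝ)))
    (I2 : 0 ≤ wedge (E2 • ((Real.cos φ2, Real.sin φ2) : ℝ × ℝ))
      (r1 • ((Real.cos θ1, Real.sin θ1) : ℝ × ℝ) - r2 • ((Real.cos θ2, Real.sin θ2) : ℝ × ℝ))) :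
    φ1 ≤ φ2 := by
  by_contra hcon
  push_neg at hcon
  have e1 : wedge (E1 • ((Real.cos φ1, Real.sin φ1) : ℝ × ℝ))
      (r2 • ((Real.cos θ2, Real.sin θ2) : ℝ × ℝ) - r1 • ((Real.cos θ1, Real.sin θ1) : ℝ × ℝ))
      = E1 * (r2 * Real.sin (θ2 - φ1) - r1 * Real.sin (θ1 - φ1)) := by
    simp only [wedge, Real.sin_sub, Prod.smul_fst, Prod.smul_snd, Prod.fst_sub, Prod.snd_sub,
      smul_eq_mul]
    ring
  have e2 : wedge (E2 • ((Real.cos φ2, Real.sin φ2) : ℝ × ℝ))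
      (r1 • ((Real.cos θ1, Real.sin θ1) : ℝ × ℝ) - r2 • ((Real.cos θ2, Real.sin θ2) : ℝ × ℝ))
      = E2 * (r1 * Real.sin (θ1 - φ2) - r2 * Real.sin (θ2 - φ2)) := by
    simp only [wedge, Real.sin_sub, Prod.smul_fst, Prod.smul_snd, Prod.fst_sub, Prod.snd_sub,
      smul_eq_mul]
    ring
  rw [e1] at I1
  rw [e2] at I2
  have J1 : 0 ≤ r2 * Real.sin (θ2 - φ1) - r1 * Real.sin (θ1 - φ1) := by nlinarith
  have J2 : 0 ≤ r1 * Real.sin (θ1 - φ2) - r2 * Real.sin (θ2 - φ2) := by nlinarith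
  have n1 : Real.sin (θ2 - φ1) = -Real.sin (φ1 - θ2) := by rw [← neg_sub φ1 θ2, Real.sin_neg]
  have n2 : Real.sin (θ1 - φ1) = -Real.sin (φ1 - θ1) := by rw [← neg_sub φ1 θ1, Real.sin_neg]
  have n3 : Real.sin (θ1 - φ2) = -Real.sin (φ2 - θ1) := by rw [← neg_sub φ2 θ1, Real.sin_neg]
  have n4 : Real.sin (θ2 - φ2) = -Real.sin (φ2 - θ2) := by rw [← neg_sub φ2 θ2, Real.sin_neg]
  rw [n1, n2] at J1
  rw [n3, n4] at J2
  have K1 : r2 * Real.sin (φ1 - θ2) ≤ r1 * Real.sin (φ1 - θ1) := by linarith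
  have K2 : r1 * Real.sin (φ2 - θ1) ≤ r2 * Real.sin (φ2 - θ2) := by linarith
  have s1 : 0 < Real.sin (φ1 - θ1) := Real.sin_pos_of_pos_of_lt_pi (by linarith) (by linarith)
  have s2 : 0 < Real.sin (φ2 - θ2) := Real.sin_pos_of_pos_of_lt_pi (by linarith) (by linarith)
  have t1 : 0 < Real.sin (φ1 - θ2) := Real.sin_pos_of_pos_of_lt_pi (by linarith) (by linarith)
  have t2 : 0 < Real.sin (φ2 - θ1) := Real.sin_pos_of_pos_of_lt_pi (by linarith) (by linarith)
  have d1 : 0 < Real.sin (θ2 - θ1) := Real.sin_pos_of_pos_of_lt_pi (by linarith) (by linarith)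
  have u1 : 0 < Real.sin (φ1 - φ2) := Real.sin_pos_of_pos_of_lt_pi (by linarith) (by linarith)
  have step1 : r2 * Real.sin (φ1 - θ2) * (r1 * Real.sin (φ2 - θ1))
      ≤ r1 * Real.sin (φ1 - θ1) * (r2 * Real.sin (φ2 - θ2)) :=
    mul_le_mul K1 K2 (mul_nonneg hr1.le t2.le) (mul_nonneg hr1.le s1.le)
  have step2 : Real.sin (φ1 - θ2) * Real.sin (φ2 - θ1) ≤ Real.sin (φ1 - θ1) * Real.sin (φ2 - θ2) := by
    have h12 : 0 < r1 * r2 := mul_pos hr1 hr2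
    nlinarith [step1]
  have key : Real.sin (φ1 - θ2) * Real.sin (φ2 - θ1) - Real.sin (φ1 - θ1) * Real.sin (φ2 - θ2)
      = Real.sin (θ2 - θ1) * Real.sin (φ1 - φ2) := by
    simp only [Real.sin_sub]
    ring
  nlinarith [mul_pos d1 u1]

set_option maxHeartbeats 1000000 in
lemma cone_bound (P Q A B : ℝ) (c : ℝ × ℝ) (hP : 0 < P) (hQ : 0 < Q)
    (hAB : A ≤ B) (hAB2 : B ≤ A + π/2)
    (h1 : 0 ≤ wedge (P • ((Real.cos A, Real.sin A) : ℝ × ℝ)) c)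
    (h2 : wedge (Q • ((Real.cos B, Real.sin B) : ℝ × ℝ)) c ≤ 0) :
    wedge (P • ((Real.cos A, Real.sin A) : ℝ × ℝ)) c ≤ (|c.1| + |c.2|) * (P * Real.sin (B - A)) ∧
      -wedge (Q • ((Real.cos B, Real.sin B) : ℝ × ℝ)) c ≤ (|c.1| + |c.2|) * (Q * Real.sin (B - A)) := by
  have hπ : (0:ℝ) < π := Real.pi_pos
  have hsin0 : 0 ≤ Real.sin (B - A) := Real.sin_nonneg_of_nonneg_of_le_pi (by linarith) (by linarith)
  have hcos0 : 0 ≤ Real.cos (B - A) := Real.cos_nonneg_of_mem_Icc ⟨by linarith, by linarith⟩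
  rcases eq_or_lt_of_le hsin0 with hz | hpos
  · -- sin (B - A) = 0 ⇒ B = A
    have hBA : B - A = 0 :=
      (Real.sin_eq_zero_iff_of_lt_of_lt (by linarith) (by linarith)).mp hz.symm
    have hBA' : B = A := by linarith
    subst hBA'
    have hrel : Q * wedge (P • ((Real.cos B, Real.sin B) : ℝ × ℝ)) c
        = P * wedge (Q • ((Real.cos B, Real.sin B) : ℝ × ℝ)) c := by
      simp only [wedge, Prod.smul_fst, Prod.smul_snd, smul_eq_mul]
      ring
    have hu0 : wedge (P • ((Real.cos B, Real.sin B) : ℝ × ℝ)) c = 0 := by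
      nlinarith
    rw [sub_self, Real.sin_zero]
    constructor
    · rw [hu0]; nlinarith
    · nlinarith
  · -- 0 < sin (B - A)
    have hWpos : 0 < P * Q * Real.sin (B - A) := by positivity
    set u := wedge (P • ((Real.cos A, Real.sin A) : ℝ × ℝ)) c with hu
    set w := wedge (Q • ((Real.cos B, Real.sin B) : ℝ × ℝ)) c with hw
    have idq : (P * Q * Real.sin (B - A)) * (c.1 * (Q * Real.cos B) + c.2 * (Q * Real.sin B))
        = (-w) * (P * Q * Real.cos (B - A)) + u * (Q^2 * (Real.sin B ^ 2 + Real.cos B ^ 2)) := by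
      rw [hu, hw]
      simp only [wedge, Prod.smul_fst, Prod.smul_snd, smul_eq_mul, Real.sin_sub, Real.cos_sub]
      ring
    have idp : (P * Q * Real.sin (B - A)) * (c.1 * (P * Real.cos A) + c.2 * (P * Real.sin A))
        = (-w) * (P^2 * (Real.sin A ^ 2 + Real.cos A ^ 2)) + u * (P * Q * Real.cos (B - A)) := by
      rw [hu, hw]
      simp only [wedge, Prod.smul_fst, Prod.smul_snd, smul_eq_mul, Real.sin_sub, Real.cos_sub]
      ring
    rw [Real.sin_sq_add_cos_sq, mul_one] at idq
    rw [Real.sin_sq_add_cos_sq, mul_one] at idp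
    have hcq : c.1 * (Q * Real.cos B) + c.2 * (Q * Real.sin B) ≤ (|c.1| + |c.2|) * Q := by
      have a1 : c.1 * Real.cos B ≤ |c.1| := by
        calc c.1 * Real.cos B ≤ |c.1 * Real.cos B| := le_abs_self _
        _ = |c.1| * |Real.cos B| := abs_mul _ _
        _ ≤ |c.1| * 1 := by nlinarith [Real.abs_cos_le_one B, abs_nonneg c.1]
        _ = |c.1| := mul_one _
      have a2 : c.2 * Real.sin B ≤ |c.2| := by
        calc c.2 * Real.sin B ≤ |c.2 * Real.sin B| := le_abs_self _
        _ = |c.2| * |Real.sin B| := abs_mul _ _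
        _ ≤ |c.2| * 1 := by nlinarith [Real.abs_sin_le_one B, abs_nonneg c.2]
        _ = |c.2| := mul_one _
      nlinarith [hQ]
    have hcp : c.1 * (P * Real.cos A) + c.2 * (P * Real.sin A) ≤ (|c.1| + |c.2|) * P := by
      have a1 : c.1 * Real.cos A ≤ |c.1| := by
        calc c.1 * Real.cos A ≤ |c.1 * Real.cos A| := le_abs_self _
        _ = |c.1| * |Real.cos A| := abs_mul _ _
        _ ≤ |c.1| * 1 := by nlinarith [Real.abs_cos_le_one A, abs_nonneg c.1]
        _ = |c.1| := mul_one _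
      have a2 : c.2 * Real.sin A ≤ |c.2| := by
        calc c.2 * Real.sin A ≤ |c.2 * Real.sin A| := le_abs_self _
        _ = |c.2| * |Real.sin A| := abs_mul _ _
        _ ≤ |c.2| * 1 := by nlinarith [Real.abs_sin_le_one A, abs_nonneg c.2]
        _ = |c.2| := mul_one _
      nlinarith [hP]
    have hmw : 0 ≤ -w := by linarith
    have hPQcos : 0 ≤ P * Q * Real.cos (B - A) := by positivity
    constructor
    · -- u ≤ (|c1|+|c2|) * (P * sin (B-A))
      have h5 : (P * Q * Real.sin (B - A)) * (c.1 * (Q * Real.cos B) + c.2 * (Q * Real.sin B))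
          ≤ (P * Q * Real.sin (B - A)) * ((|c.1| + |c.2|) * Q) :=
        mul_le_mul_of_nonneg_left hcq hWpos.le
      have h6 : 0 ≤ (-w) * (P * Q * Real.cos (B - A)) := mul_nonneg hmw hPQcos
      have h7 : u * Q^2 ≤ (P * Q * Real.sin (B - A)) * ((|c.1| + |c.2|) * Q) := by
        linarith [idq, h5, h6]
      nlinarith [h7, pow_pos hQ 2, sq_nonneg Q]
    · -- -w ≤ (|c1|+|c2|) * (Q * sin (B-A))
      have h5 : (P * Q * Real.sin (B - A)) * (c.1 * (P * Real.cos A) + c.2 * (P * Real.sin A))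
          ≤ (P * Q * Real.sin (B - A)) * ((|c.1| + |c.2|) * P) :=
        mul_le_mul_of_nonneg_left hcp hWpos.le
      have h6 : 0 ≤ u * (P * Q * Real.cos (B - A)) := mul_nonneg h1 hPQcos
      have h7 : (-w) * P^2 ≤ (P * Q * Real.sin (B - A)) * ((|c.1| + |c.2|) * P) := by
        linarith [idp, h5, h6]
      nlinarith [h7, pow_pos hP 2]


end Aux13

set_option maxHeartbeats 1000000

/-- Under (P-ρS), with `s` the natural parametrization of `S`,
`s⊥(θ)` the Birkhoff-orthogonal successor of `s(θ)`, and `μ(θ) > 0` the unique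
number with `ρ(s(θ) ± μ(θ)s⊥(θ)) ∈ S`, the Riemann–Stieltjes integral
`∫_α^β μ(θ) s⊥(θ) ∧ ds(θ)` equals `0` for all `0 ≤ α < β ≤ 2π`. -/

theorem stmt_13 (N : ℝ × ℝ → ℝ) (hN : IsNorm N) (ρ : ℝ) (hρ0 : 0 < ρ) (hρ1 : ρ < 1)
    (hP : PropP N ρ) (s sperp : ℝ → ℝ × ℝ) (μ : ℝ → ℝ)
    (hs : ∀ θ : ℝ, s θ = (N (Real.cos θ, Real.sin θ))⁻¹ • ((Real.cos θ, Real.sin θ) : ℝ × ℝ))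
    (hperp : ∀ θ ∈ Icc (0:ℝ) (2 * π), N (sperp θ) = 1 ∧ 0 < wedge (s θ) (sperp θ) ∧
      ∀ l : ℝ, N (s θ) ≤ N (s θ + l • sperp θ))
    (hμ : ∀ θ ∈ Icc (0:ℝ) (2 * π), 0 < μ θ ∧ N (ρ • (s θ - μ θ • sperp θ)) = 1 ∧
      N (ρ • (s θ + μ θ • sperp θ)) = 1)
    (α β : ℝ) (hα : 0 ≤ α) (hαβ : α < β) (hβ : β ≤ 2 * π) :
    HasRSIntegral (fun θ => μ θ • sperp θ) s α β 0 := by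
  have hπ : (0:ℝ) < π := Real.pi_pos
  obtain ⟨cl, cu, hcl, hcu, hb⟩ := IsNorm.exists_bounds hN
  -- positivity of N on the circle parametrization
  have hN0 : ∀ θ : ℝ, 0 < N ((Real.cos θ, Real.sin θ) : ℝ × ℝ) := by
    intro θ
    have hne : ((Real.cos θ, Real.sin θ) : ℝ × ℝ) ≠ 0 := by
      intro h
      have h1 : Real.cos θ = 0 := congrArg Prod.fst h
      have h2 : Real.sin θ = 0 := congrArg Prod.snd h
      nlinarith [Real.sin_sq_add_cos_sq θ]
    have h3 := (hb ((Real.cos θ, Real.sin θ) : ℝ × ℝ)).1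
    have hpos : 0 < ‖((Real.cos θ, Real.sin θ) : ℝ × ℝ)‖ := norm_pos_iff.mpr hne
    nlinarith
  have hNs1 : ∀ θ : ℝ, N (s θ) = 1 := by
    intro θ
    rw [hs θ, hN.2.1, abs_inv, abs_of_pos (hN0 θ)]
    exact inv_mul_cancel₀ (ne_of_gt (hN0 θ))
  -- Lipschitz constant for s
  have hNu_lb : ∀ θ : ℝ, cl/2 ≤ N ((Real.cos θ, Real.sin θ) : ℝ × ℝ) := by
    intro θ
    have h1 : (1:ℝ)/2 ≤ ‖((Real.cos θ, Real.sin θ) : ℝ × ℝ)‖ := by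
      by_contra hcon
      push_neg at hcon
      have h2 : |Real.cos θ| < 1/2 := by
        have := norm_fst_le ((Real.cos θ, Real.sin θ) : ℝ × ℝ)
        rw [Real.norm_eq_abs] at this
        linarith
      have h3 : |Real.sin θ| < 1/2 := by
        have := norm_snd_le ((Real.cos θ, Real.sin θ) : ℝ × ℝ)
        rw [Real.norm_eq_abs] at this
        linarith
      nlinarith [Real.sin_sq_add_cos_sq θ, sq_abs (Real.cos θ), sq_abs (Real.sin θ),
        abs_nonneg (Real.cos θ), abs_nonneg (Real.sin θ)]
    have h4 := (hb ((Real.cos θ, Real.sin θ) : ℝ × ℝ)).1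
    nlinarith
  have hNu_ub : ∀ θ : ℝ, N ((Real.cos θ, Real.sin θ) : ℝ × ℝ) ≤ cu := by
    intro θ
    have h1 : ‖((Real.cos θ, Real.sin θ) : ℝ × ℝ)‖ ≤ 1 := by
      rw [Prod.norm_def]
      apply max_le <;> rw [Real.norm_eq_abs]
      · exact Real.abs_cos_le_one θ
      · exact Real.abs_sin_le_one θ
    have h2 := (hb ((Real.cos θ, Real.sin θ) : ℝ × ℝ)).2
    nlinarith
  have huu : ∀ θ1 θ2 : ℝ, ‖((Real.cos θ1, Real.sin θ1) : ℝ × ℝ) - ((Real.cos θ2, Real.sin θ2) : ℝ × ℝ)‖ ≤ |θ1 - θ2| := by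
    intro θ1 θ2
    rw [Prod.norm_def]
    apply max_le <;> rw [Real.norm_eq_abs]
    · exact cos_lip' θ1 θ2
    · exact sin_lip' θ1 θ2
  set L : ℝ := 2/cl + 4*cu/cl^2 with hLdef
  have hL : 0 < L := by positivity
  have hslip : ∀ θ1 θ2 : ℝ, ‖s θ1 - s θ2‖ ≤ L * |θ1 - θ2| := by
    intro θ1 θ2
    have hn1 : 0 < N ((Real.cos θ1, Real.sin θ1) : ℝ × ℝ) := hN0 θ1
    have hn2 : 0 < N ((Real.cos θ2, Real.sin θ2) : ℝ × ℝ) := hN0 θ2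
    have key : s θ1 - s θ2 = (N ((Real.cos θ1, Real.sin θ1) : ℝ × ℝ))⁻¹ • (((Real.cos θ1, Real.sin θ1) : ℝ × ℝ) - ((Real.cos θ2, Real.sin θ2) : ℝ × ℝ))
        + ((N ((Real.cos θ1, Real.sin θ1) : ℝ × ℝ))⁻¹ - (N ((Real.cos θ2, Real.sin θ2) : ℝ × ℝ))⁻¹) • ((Real.cos θ2, Real.sin θ2) : ℝ × ℝ) := by
      rw [hs θ1, hs θ2]
      module
    rw [key]
    have hb1 : ‖(N ((Real.cos θ1, Real.sin θ1) : ℝ × ℝ))⁻¹ • (((Real.cos θ1, Real.sin θ1) : ℝ × ℝ) - ((Real.cos θ2, Real.sin θ2) : ℝ × ℝ))‖ ≤ (2/cl) * |θ1 - θ2| := by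
      rw [norm_smul, Real.norm_eq_abs, abs_inv, abs_of_pos hn1]
      have h1 : (N ((Real.cos θ1, Real.sin θ1) : ℝ × ℝ))⁻¹ ≤ 2/cl := by
        rw [inv_eq_one_div]
        rw [div_le_div_iff₀ hn1 hcl]
        linarith [hNu_lb θ1]
      have h2 := huu θ1 θ2
      have h3 : 0 < (N ((Real.cos θ1, Real.sin θ1) : ℝ × ℝ))⁻¹ := inv_pos.mpr hn1
      nlinarith [norm_nonneg (((Real.cos θ1, Real.sin θ1) : ℝ × ℝ) - ((Real.cos θ2, Real.sin θ2) : ℝ × ℝ)), abs_nonneg (θ1 - θ2)]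
    have hb2 : ‖((N ((Real.cos θ1, Real.sin θ1) : ℝ × ℝ))⁻¹ - (N ((Real.cos θ2, Real.sin θ2) : ℝ × ℝ))⁻¹) • ((Real.cos θ2, Real.sin θ2) : ℝ × ℝ)‖ ≤ (4*cu/cl^2) * |θ1 - θ2| := by
      rw [norm_smul, Real.norm_eq_abs]
      have hd : (N ((Real.cos θ1, Real.sin θ1) : ℝ × ℝ))⁻¹ - (N ((Real.cos θ2, Real.sin θ2) : ℝ × ℝ))⁻¹
          = (N ((Real.cos θ2, Real.sin θ2) : ℝ × ℝ) - N ((Real.cos θ1, Real.sin θ1) : ℝ × ℝ)) / (N ((Real.cos θ1, Real.sin θ1) : ℝ × ℝ) * N ((Real.cos θ2, Real.sin θ2) : ℝ × ℝ)) := by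
        field_simp
      rw [hd, abs_div, abs_of_pos (mul_pos hn1 hn2)]
      have hnum : |N ((Real.cos θ2, Real.sin θ2) : ℝ × ℝ) - N ((Real.cos θ1, Real.sin θ1) : ℝ × ℝ)| ≤ cu * |θ1 - θ2| := by
        calc |N ((Real.cos θ2, Real.sin θ2) : ℝ × ℝ) - N ((Real.cos θ1, Real.sin θ1) : ℝ × ℝ)|
            ≤ N (((Real.cos θ2, Real.sin θ2) : ℝ × ℝ) - ((Real.cos θ1, Real.sin θ1) : ℝ × ℝ)) := hN.sub_abs_le _ _
        _ ≤ cu * ‖((Real.cos θ2, Real.sin θ2) : ℝ × ℝ) - ((Real.cos θ1, Real.sin θ1) : ℝ × ℝ)‖ := (hb _).2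
        _ ≤ cu * |θ2 - θ1| := by nlinarith [huu θ2 θ1, norm_nonneg (((Real.cos θ2, Real.sin θ2) : ℝ × ℝ) - ((Real.cos θ1, Real.sin θ1) : ℝ × ℝ))]
        _ = cu * |θ1 - θ2| := by rw [abs_sub_comm]
      have hden : cl^2/4 ≤ N ((Real.cos θ1, Real.sin θ1) : ℝ × ℝ) * N ((Real.cos θ2, Real.sin θ2) : ℝ × ℝ) := by
        nlinarith [hNu_lb θ1, hNu_lb θ2]
      have hn2' : ‖((Real.cos θ2, Real.sin θ2) : ℝ × ℝ)‖ ≤ 1 := by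
        rw [Prod.norm_def]
        apply max_le <;> rw [Real.norm_eq_abs]
        · exact Real.abs_cos_le_one θ2
        · exact Real.abs_sin_le_one θ2
      have hq : |N ((Real.cos θ2, Real.sin θ2) : ℝ × ℝ) - N ((Real.cos θ1, Real.sin θ1) : ℝ × ℝ)| / (N ((Real.cos θ1, Real.sin θ1) : ℝ × ℝ) * N ((Real.cos θ2, Real.sin θ2) : ℝ × ℝ))
          ≤ (cu * |θ1 - θ2|) / (cl^2/4) := by
        apply div_le_div₀ (by positivity) hnum (by positivity) hden
      calc |N ((Real.cos θ2, Real.sin θ2) : ℝ × ℝ) - N ((Real.cos θ1, Real.sin θ1) : ℝ × ℝ)| / (N ((Real.cos θ1, Real.sin θ1) : ℝ × ℝ) * N ((Real.cos θ2, Real.sin θ2) : ℝ × ℝ)) * ‖((Real.cos θ2, Real.sin θ2) : ℝ × ℝ)‖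
          ≤ (cu * |θ1 - θ2|) / (cl^2/4) * 1 := by
            apply mul_le_mul hq hn2' (norm_nonneg _) (by positivity)
      _ = (4*cu/cl^2) * |θ1 - θ2| := by field_simp
    calc ‖_ + _‖ ≤ (2/cl) * |θ1 - θ2| + (4*cu/cl^2) * |θ1 - θ2| := le_trans (norm_add_le _ _) (add_le_add hb1 hb2)
    _ = L * |θ1 - θ2| := by rw [hLdef]; ring
  -- support inequality
  have hsupp : ∀ τ ∈ Icc (0:ℝ) (2*π), ∀ θ : ℝ, 0 ≤ wedge (sperp τ) (s θ - s τ) := by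
    intro τ hτ θ
    obtain ⟨hv1, hvw, hvs⟩ := hperp τ hτ
    have hmax := support_max hN (s τ) (sperp τ) (hNs1 τ) hvw hvs (s θ) (le_of_eq (hNs1 θ))
    rw [wedge_sub_right', wedge_anti' (sperp τ) (s θ), wedge_anti' (sperp τ) (s τ)]
    linarith
  -- polar decomposition of sperp
  have hpolar : ∀ θ ∈ Icc (0:ℝ) (2*π), ∃ E φ' : ℝ, 0 < E ∧ E ≤ 2/cl ∧ θ < φ' ∧ φ' < θ + π ∧
      sperp θ = E • ((Real.cos φ', Real.sin φ') : ℝ × ℝ) := by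
    intro θ hθ
    obtain ⟨hv1, hvw, hvs⟩ := hperp θ hθ
    have hy : 0 < Real.cos θ * (sperp θ).2 - Real.sin θ * (sperp θ).1 := by
      have he : wedge (s θ) (sperp θ) = (N ((Real.cos θ, Real.sin θ) : ℝ × ℝ))⁻¹ * (Real.cos θ * (sperp θ).2 - Real.sin θ * (sperp θ).1) := by
        rw [hs θ]
        simp only [wedge, Prod.smul_fst, Prod.smul_snd, smul_eq_mul]
        ring
      rw [he] at hvw
      nlinarith [inv_pos.mpr (hN0 θ)]
    obtain ⟨E, φ', hE, hEle, h1, h2, h3⟩ := polar_exists θ (sperp θ) hy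
    refine ⟨E, φ', hE, ?_, h1, h2, h3⟩
    have hv : ‖sperp θ‖ ≤ 1/cl := by
      have h4 := (hb (sperp θ)).1
      rw [hv1] at h4
      rw [le_div_iff₀ hcl]
      linarith
    have h5 := norm_fst_le (sperp θ)
    have h6 := norm_snd_le (sperp θ)
    rw [Real.norm_eq_abs] at h5 h6
    have h7 : 2/cl = 2*(1/cl) := by ring
    linarith
  choose! Ef φf hE0 hE2 hφl hφu hveq using hpolar
  -- monotonicity of the angle function
  have hmono : ∀ θ1 ∈ Icc (0:ℝ) (2*π), ∀ θ2 ∈ Icc (0:ℝ) (2*π), θ1 ≤ θ2 → φf θ1 ≤ φf θ2 := by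
    intro θ1 h1m θ2 h2m h12
    rcases eq_or_lt_of_le h12 with rfl | hlt
    · exact le_refl _
    rcases le_or_gt (θ1 + π) θ2 with hfar | hnear
    · linarith [hφu θ1 h1m, hφl θ2 h2m]
    · have I1 := hsupp θ1 h1m θ2
      have I2 := hsupp θ2 h2m θ1
      rw [hveq θ1 h1m, hs θ1, hs θ2] at I1
      rw [hveq θ2 h2m, hs θ1, hs θ2] at I2
      exact mono_aux θ1 θ2 (φf θ1) (φf θ2)
        ((N ((Real.cos θ1, Real.sin θ1) : ℝ × ℝ))⁻¹) ((N ((Real.cos θ2, Real.sin θ2) : ℝ × ℝ))⁻¹)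
        (Ef θ1) (Ef θ2) hlt hnear (hφl θ1 h1m) (hφu θ1 h1m) (hφl θ2 h2m) (hφu θ2 h2m)
        (inv_pos.mpr (hN0 θ1)) (inv_pos.mpr (hN0 θ2)) (hE0 θ1 h1m) (hE0 θ2 h2m) I1 I2
  -- bound on μ
  set M : ℝ := (1+ρ)/ρ with hM
  have hMpos : 0 < M := by positivity
  have hμub : ∀ θ ∈ Icc (0:ℝ) (2*π), μ θ ≤ M := by
    intro θ hθ
    obtain ⟨hμ0, hm1, hm2⟩ := hμ θ hθ
    have e1 : (ρ * μ θ) • sperp θ = ρ • (s θ + μ θ • sperp θ) - ρ • s θ := by module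
    have h3 : N ((ρ * μ θ) • sperp θ) ≤ N (ρ • (s θ + μ θ • sperp θ)) + N (ρ • s θ) := by
      rw [e1]
      have h4 := hN.2.2 (ρ • (s θ + μ θ • sperp θ)) (-(ρ • s θ))
      rw [hN.neg'] at h4
      have h5 : ρ • (s θ + μ θ • sperp θ) + -(ρ • s θ) = ρ • (s θ + μ θ • sperp θ) - ρ • s θ := by
        module
      rw [h5] at h4
      exact h4
    rw [hm2] at h3
    rw [hN.2.1, hN.2.1, hNs1, (hperp θ hθ).1] at h3
    rw [abs_of_pos (mul_pos hρ0 hμ0), abs_of_pos hρ0] at h3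
    rw [hM, le_div_iff₀ hρ0]
    nlinarith
  -- the main estimate
  set K : ℝ := 4*L/cl with hK
  have hKpos : 0 < K := by positivity
  set D : ℝ := M*K*3*π + 1 with hD
  have hDpos : 0 < D := by positivity
  intro ε hε
  set δ : ℝ := min 1 (ε/D) with hδdef
  have hδ0 : 0 < δ := lt_min one_pos (div_pos hε hDpos)
  refine ⟨δ, hδ0, ?_⟩
  intro n t tg hn ht0 htn hpart
  have hstep : ∀ i, i < n → t i ≤ t (i+1) := fun i hi => (hpart i hi).2.2.1
  have htmono : ∀ i j : ℕ, i ≤ j → j ≤ n → t i ≤ t j := by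
    intro i j hij hjn
    induction j with
    | zero =>
      have : i = 0 := Nat.le_zero.mp hij
      simp [this]
    | succ k ih =>
      rcases Nat.eq_or_lt_of_le hij with h | hlt
      · rw [h]
      · have h1 : t i ≤ t k := ih (Nat.lt_succ_iff.mp hlt) (le_trans (Nat.le_succ k) hjn)
        exact le_trans h1 (hstep k (Nat.lt_of_lt_of_le (Nat.lt_succ_self k) hjn))
  have htmemI : ∀ i, i ≤ n → t i ∈ Icc (0:ℝ) (2*π) := by
    intro i hi
    constructor
    · have h1 := htmono 0 i (Nat.zero_le i) hi
      rw [ht0] at h1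
      linarith
    · have h1 := htmono i n hi (le_refl n)
      rw [htn] at h1
      linarith
  have key : ∀ i, i < n →
      |wedge ((μ (tg i)) • sperp (tg i)) (s (t (i+1)) - s (t i))| ≤ M*K*δ*(φf (t (i+1)) - φf (t i)) := by
    intro i hi
    obtain ⟨hta, htb, htt, htd⟩ := hpart i hi
    have hain : t i ∈ Icc (0:ℝ) (2*π) := htmemI i (le_of_lt hi)
    have hbin : t (i+1) ∈ Icc (0:ℝ) (2*π) := htmemI (i+1) (Nat.succ_le_of_lt hi)
    have hτin : tg i ∈ Icc (0:ℝ) (2*π) := ⟨le_trans hain.1 hta, le_trans htb hbin.2⟩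
    set a := t i with ha
    set b := t (i+1) with hbb
    set τ' := tg i with hτ'
    set X := wedge (sperp τ') (s b - s τ') with hX
    set Y := wedge (sperp τ') (s a - s τ') with hY
    have hX0 : 0 ≤ X := hsupp τ' hτin b
    have hY0 : 0 ≤ Y := hsupp τ' hτin a
    have hterm : wedge ((μ τ') • sperp τ') (s b - s a) = μ τ' * (X - Y) := by
      rw [wedge_smul_left']
      have h1 : s b - s a = (s b - s τ') - (s a - s τ') := by abel
      rw [h1, wedge_sub_right', hX, hY]
    -- angle monotonicity
    have hpab : φf a ≤ φf τ' := hmono a hain τ' hτin hta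
    have hpτb : φf τ' ≤ φf b := hmono τ' hτin b hbin htb
    -- component bounds for the two chords
    have hcb : |(s b - s τ').1| + |(s b - s τ').2| ≤ 2*(L*δ) := by
      have h1 := hslip b τ'
      have h2 : |b - τ'| ≤ δ := by
        rw [abs_of_nonneg (by linarith)]
        linarith
      have h3 : ‖s b - s τ'‖ ≤ L*δ := le_trans h1 (mul_le_mul_of_nonneg_left h2 hL.le)
      have h4 := norm_fst_le (s b - s τ')
      have h5 := norm_snd_le (s b - s τ')
      rw [Real.norm_eq_abs] at h4 h5
      linarith
    have hca : |(s τ' - s a).1| + |(s τ' - s a).2| ≤ 2*(L*δ) := by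
      have h1 := hslip τ' a
      have h2 : |τ' - a| ≤ δ := by
        rw [abs_of_nonneg (by linarith)]
        linarith
      have h3 : ‖s τ' - s a‖ ≤ L*δ := le_trans h1 (mul_le_mul_of_nonneg_left h2 hL.le)
      have h4 := norm_fst_le (s τ' - s a)
      have h5 := norm_snd_le (s τ' - s a)
      rw [Real.norm_eq_abs] at h4 h5
      linarith
    have hXY : X + Y ≤ K*δ*(φf b - φf a) := by
      rcases le_or_gt (φf b - φf a) (π/2) with hgood | hbad
      · -- good case: cone bounds
        have h1X : 0 ≤ wedge ((Ef τ') • ((Real.cos (φf τ'), Real.sin (φf τ')) : ℝ × ℝ)) (s b - s τ') := by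
          rw [← hveq τ' hτin]
          exact hX0
        have h2X : wedge ((Ef b) • ((Real.cos (φf b), Real.sin (φf b)) : ℝ × ℝ)) (s b - s τ') ≤ 0 := by
          have h6 := hsupp b hbin τ'
          rw [hveq b hbin] at h6
          have e : s τ' - s b = -(s b - s τ') := by abel
          rw [e, wedge_neg_right'] at h6
          linarith
        obtain ⟨hXb, -⟩ := cone_bound (Ef τ') (Ef b) (φf τ') (φf b) (s b - s τ')
          (hE0 τ' hτin) (hE0 b hbin) hpτb (by linarith) h1X h2X
        rw [← hveq τ' hτin] at hXb
        have h1Y : 0 ≤ wedge ((Ef a) • ((Real.cos (φf a), Real.sin (φf a)) : ℝ × ℝ)) (s τ' - s a) := by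
          rw [← hveq a hain]
          exact hsupp a hain τ'
        have h2Y : wedge ((Ef τ') • ((Real.cos (φf τ'), Real.sin (φf τ')) : ℝ × ℝ)) (s τ' - s a) ≤ 0 := by
          rw [← hveq τ' hτin]
          have e : s τ' - s a = -(s a - s τ') := by abel
          rw [e, wedge_neg_right']
          linarith
        obtain ⟨-, hYb⟩ := cone_bound (Ef a) (Ef τ') (φf a) (φf τ') (s τ' - s a)
          (hE0 a hain) (hE0 τ' hτin) hpab (by linarith) h1Y h2Y
        rw [← hveq τ' hτin] at hYb
        have hYeq : -wedge (sperp τ') (s τ' - s a) = Y := by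
          have e : s τ' - s a = -(s a - s τ') := by abel
          rw [e, wedge_neg_right', hY, neg_neg]
        rw [hYeq] at hYb
        -- now numeric assembly
        have hsinb : Real.sin (φf b - φf τ') ≤ φf b - φf τ' := Real.sin_le (by linarith)
        have hsina : Real.sin (φf τ' - φf a) ≤ φf τ' - φf a := Real.sin_le (by linarith)
        have hsinb0 : 0 ≤ Real.sin (φf b - φf τ') :=
          Real.sin_nonneg_of_nonneg_of_le_pi (by linarith) (by linarith)
        have hsina0 : 0 ≤ Real.sin (φf τ' - φf a) :=
          Real.sin_nonneg_of_nonneg_of_le_pi (by linarith) (by linarith)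
        have hEτ := hE2 τ' hτin
        have hEτ0 := hE0 τ' hτin
        have hXfin : X ≤ 2*(L*δ) * ((2/cl) * (φf b - φf τ')) := by
          calc X ≤ (|(s b - s τ').1| + |(s b - s τ').2|) * (Ef τ' * Real.sin (φf b - φf τ')) := hXb
          _ ≤ 2*(L*δ) * ((2/cl) * (φf b - φf τ')) := by
              apply mul_le_mul hcb
              · apply mul_le_mul hEτ hsinb hsinb0 (by positivity)
              · exact mul_nonneg hEτ0.le hsinb0
              · positivity
        have hYfin : Y ≤ 2*(L*δ) * ((2/cl) * (φf τ' - φf a)) := by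
          calc Y ≤ (|(s τ' - s a).1| + |(s τ' - s a).2|) * (Ef τ' * Real.sin (φf τ' - φf a)) := hYb
          _ ≤ 2*(L*δ) * ((2/cl) * (φf τ' - φf a)) := by
              apply mul_le_mul hca
              · apply mul_le_mul hEτ hsina hsina0 (by positivity)
              · exact mul_nonneg hEτ0.le hsina0
              · positivity
        have hfin : 2*(L*δ) * ((2/cl) * (φf b - φf τ')) + 2*(L*δ) * ((2/cl) * (φf τ' - φf a))
            = K*δ*(φf b - φf a) := by
          rw [hK]
          field_simp
          ring
        linarith
      · -- bad case: crude bound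
        have hsn : ‖sperp τ'‖ ≤ 1/cl := by
          have h4 := (hb (sperp τ')).1
          rw [(hperp τ' hτin).1] at h4
          rw [le_div_iff₀ hcl]
          linarith
        have hv1 : |(sperp τ').1| ≤ 1/cl := by
          have := norm_fst_le (sperp τ')
          rw [Real.norm_eq_abs] at this
          linarith
        have hv2 : |(sperp τ').2| ≤ 1/cl := by
          have := norm_snd_le (sperp τ')
          rw [Real.norm_eq_abs] at this
          linarith
        have hXcr : X ≤ (1/cl) * (2*(L*δ)) := by
          have h6 := wedge_abs_le' (sperp τ') (s b - s τ') (1/cl) hv1 hv2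
          have h7 : X ≤ |X| := le_abs_self X
          rw [hX] at h7 ⊢
          calc wedge (sperp τ') (s b - s τ') ≤ |wedge (sperp τ') (s b - s τ')| := le_abs_self _
          _ ≤ (1/cl) * (|(s b - s τ').1| + |(s b - s τ').2|) := h6
          _ ≤ (1/cl) * (2*(L*δ)) := by
              apply mul_le_mul_of_nonneg_left hcb (by positivity)
        have hYcr : Y ≤ (1/cl) * (2*(L*δ)) := by
          have h6 := wedge_abs_le' (sperp τ') (s a - s τ') (1/cl) hv1 hv2
          have hca' : |(s a - s τ').1| + |(s a - s τ').2| ≤ 2*(L*δ) := by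
            have e : s a - s τ' = -(s τ' - s a) := by abel
            rw [e]
            simp only [Prod.fst_neg, Prod.snd_neg, abs_neg]
            exact hca
          rw [hY]
          calc wedge (sperp τ') (s a - s τ') ≤ |wedge (sperp τ') (s a - s τ')| := le_abs_self _
          _ ≤ (1/cl) * (|(s a - s τ').1| + |(s a - s τ').2|) := h6
          _ ≤ (1/cl) * (2*(L*δ)) := by
              apply mul_le_mul_of_nonneg_left hca' (by positivity)
        have hsum : X + Y ≤ K*δ := by
          have : (1/cl) * (2*(L*δ)) + (1/cl) * (2*(L*δ)) = K*δ := by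
            rw [hK]
            field_simp
            ring
          linarith
        have hΔ1 : 1 ≤ φf b - φf a := by
          nlinarith [Real.pi_gt_three]
        nlinarith [mul_nonneg hKpos.le hδ0.le]
    -- conclude the per-term bound
    have hμpos := (hμ τ' hτin).1
    have habs : |wedge ((μ τ') • sperp τ') (s b - s a)| ≤ M * (X+Y) := by
      rw [hterm, abs_mul, abs_of_pos hμpos]
      have h8 : |X - Y| ≤ X + Y := by
        rw [abs_le]
        constructor <;> linarith
      calc μ τ' * |X - Y| ≤ μ τ' * (X+Y) := mul_le_mul_of_nonneg_left h8 hμpos.le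
      _ ≤ M * (X+Y) := mul_le_mul_of_nonneg_right (hμub τ' hτin) (by linarith)
    calc |wedge ((μ τ') • sperp τ') (s b - s a)| ≤ M * (X+Y) := habs
    _ ≤ M * (K*δ*(φf b - φf a)) := mul_le_mul_of_nonneg_left hXY hMpos.le
    _ = M*K*δ*(φf b - φf a) := by ring
  -- sum it up
  rw [sub_zero]
  have hφtot : φf (t n) - φf (t 0) ≤ 3*π := by
    rw [ht0, htn]
    have hβin : β ∈ Icc (0:ℝ) (2*π) := ⟨by linarith, hβ⟩
    have hαin : α ∈ Icc (0:ℝ) (2*π) := ⟨hα, by linarith⟩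
    have h1 := hφu β hβin
    have h2 := hφl α hαin
    linarith
  calc |∑ i ∈ Finset.range n, wedge ((fun θ => μ θ • sperp θ) (tg i)) (s (t (i + 1)) - s (t i))|
      ≤ ∑ i ∈ Finset.range n, |wedge ((μ (tg i)) • sperp (tg i)) (s (t (i + 1)) - s (t i))| :=
        Finset.abs_sum_le_sum_abs _ _
  _ ≤ ∑ i ∈ Finset.range n, M*K*δ*(φf (t (i+1)) - φf (t i)) :=
        Finset.sum_le_sum (fun i hi => key i (Finset.mem_range.mp hi))
  _ = M*K*δ*(φf (t n) - φf (t 0)) := by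
        rw [← Finset.mul_sum, Finset.sum_range_sub (fun i => φf (t i))]
  _ ≤ M*K*δ*(3*π) := by
        have h1 : 0 ≤ M*K*δ := by positivity
        nlinarith
  _ < ε := by
        have hδε : δ ≤ ε/D := min_le_right _ _
        have h1 : M*K*δ*(3*π) ≤ M*K*3*π*(ε/D) := by
          have h2 : 0 ≤ M*K*3*π := by positivity
          nlinarith
        have h2 : M*K*3*π*(ε/D) < ε := by
          have hD1 : M*K*3*π < D := by rw [hD]; linarith
          calc M*K*3*π*(ε/D) < D*(ε/D) := by
                apply mul_lt_mul_of_pos_right hD1 (div_pos hε hDpos)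
          _ = ε := by field_simp
        linarith
end
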